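/- arXiv:1910.00168 — 13 statements merged into one kernel-verified Lean document; each statement's English description precedes it below -/
import Mathlib

section
/- For a finite simple graph G, a set of vertices S is an ℓ-forcing set if and only if S intersects every ℓ-forcing fort of G. -/
open SimpleGraph

/-- The set of vertices that eventually become colored in the leaky zero forcing process
on graph `G` with leaks `L` and initially colored set `S`. -/
inductive SimpleGraph.LeakyForces {V : Type*} (G : SimpleGraph V) (L S : Set V) : V → Prop
  | init (v : V) (hv : v ∈ S) : SimpleGraph.LeakyForces G L S v
  | force (u v : V) (hu : u ∉ L) (hcu : SimpleGraph.LeakyForces G L S u) (huv : G.Adj u v)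
      (hall : ∀ w, G.Adj u w → w ≠ v → SimpleGraph.LeakyForces G L S w) :
      SimpleGraph.LeakyForces G L S v

/-- `S` is an `ℓ`-forcing set: for every placement of (at most) `ℓ` leaks, starting from `S`
colored, every vertex eventually becomes colored. -/
def SimpleGraph.IsLeakyForcingSet {V : Type*} (G : SimpleGraph V) (ℓ : ℕ) (S : Set V) : Prop :=
  ∀ L : Finset V, L.card ≤ ℓ → ∀ v, G.LeakyForces ↑L S v

/-- The `ℓ`-forcing number `Z_{(ℓ)}(G)`: minimum size of an `ℓ`-forcing set. -/
noncomputable def SimpleGraph.leakyForcingNumber {V : Type*} (G : SimpleGraph V) (ℓ : ℕ) : ℕ :=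
  sInf {k | ∃ S : Finset V, S.card = k ∧ G.IsLeakyForcingSet ℓ ↑S}

/-- An ℓ-forcing fort: a nonempty set of vertices that is exactly the set of uncolored
vertices after exhaustively forcing from some initial set with some placement of ℓ leaks. -/
def SimpleGraph.IsLeakyFort {V : Type*} (G : SimpleGraph V) (ℓ : ℕ) (T : Set V) : Prop :=
  T.Nonempty ∧ ∃ (S : Set V) (L : Finset V), L.card ≤ ℓ ∧
    T = {v | ¬ G.LeakyForces ↑L S v}


lemma LeakyForces.mono {V : Type*} (G : SimpleGraph V) (L S S' : Set V)
    (h : ∀ s ∈ S, G.LeakyForces L S' s) :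
    ∀ v, G.LeakyForces L S v → G.LeakyForces L S' v := by
  intro v hv
  induction hv with
  | init v hv => exact h v hv
  | force u v hu hcu huv hall ihu ihall =>
      exact SimpleGraph.LeakyForces.force u v hu ihu huv ihall

theorem leaky_forcing_iff_meets_every_fort {V : Type*} [Fintype V] (G : SimpleGraph V)
    (ℓ : ℕ) (S : Set V) :
    G.IsLeakyForcingSet ℓ S ↔ ∀ T : Set V, G.IsLeakyFort ℓ T → (S ∩ T).Nonempty := by
  constructor
  · rintro hS T ⟨⟨t, ht⟩, S', L, hL, rfl⟩
    by_contra hne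
    rw [Set.not_nonempty_iff_eq_empty] at hne
    have hsub : ∀ s ∈ S, G.LeakyForces ↑L S' s := by
      intro s hs
      by_contra hc
      have : s ∈ S ∩ {v | ¬ G.LeakyForces ↑L S' v} := ⟨hs, hc⟩
      simp [hne] at this
    exact ht (LeakyForces.mono G ↑L S S' hsub t (hS L hL t))
  · intro h L hL v
    by_contra hv
    obtain ⟨s, hs, hsT⟩ := h {w | ¬ G.LeakyForces ↑L S w} ⟨⟨v, hv⟩, S, L, hL, rfl⟩
    exact hsT (SimpleGraph.LeakyForces.init s hs)
end

section
/- For n ≥ 2 and any ℓ ≥ 2, the ℓ-forcing number of the path P_n equals n; i.e., every vertex must be initially colored. -/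
open SimpleGraph

lemma path_forcing_full (n : ℕ) (ℓ : ℕ) (hℓ : 2 ≤ ℓ) (S : Finset (Fin n))
    (hS : (SimpleGraph.pathGraph n).IsLeakyForcingSet ℓ ↑S) : S = Finset.univ := by
  classical
  by_contra h
  obtain ⟨v, hv⟩ : ∃ v : Fin n, v ∉ S := by
    by_contra h'
    push_neg at h'
    exact h (Finset.eq_univ_iff_forall.2 h')
  set L : Finset (Fin n) := Finset.univ.filter (fun u => (pathGraph n).Adj u v) with hL
  have hcard : L.card ≤ ℓ := by
    refine le_trans ?_ hℓ
    have : L.card ≤ ({v.val - 1, v.val + 1} : Finset ℕ).card := by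
      apply Finset.card_le_card_of_injOn Fin.val
      · intro u hu
        simp only [hL, Finset.mem_coe, Finset.mem_filter, pathGraph_adj] at hu
        rcases hu.2 with h1 | h1
        · simp [← h1]
        · simp [← h1]
      · exact fun a _ b _ hab => Fin.val_injective hab
    refine this.trans ?_
    apply le_trans (Finset.card_insert_le _ _)
    simp
  have := hS L hcard v
  cases this with
  | init _ hv' => exact hv hv'
  | force u _ hu _ huv _ =>
    exact hu (by simp [hL, huv])

theorem path_ell_forcing (n : ℕ) (hn : 2 ≤ n) (ℓ : ℕ) (hℓ : 2 ≤ ℓ) :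
    (SimpleGraph.pathGraph n).leakyForcingNumber ℓ = n := by
  have hmem : n ∈ {k | ∃ S : Finset (Fin n), S.card = k ∧
      (pathGraph n).IsLeakyForcingSet ℓ ↑S} := by
    refine ⟨Finset.univ, by simp, fun L _ v => ?_⟩
    exact SimpleGraph.LeakyForces.init v (by simp)
  refine le_antisymm (Nat.sInf_le hmem) (le_csInf ⟨n, hmem⟩ ?_)
  rintro k ⟨S, rfl, hS⟩
  rw [path_forcing_full n ℓ hℓ S hS]
  simp
end

section
/- Let T be a finite tree with t ≥ 2 leaves. Then any set consisting of t − 1 of the leaves of T is a zero forcing set (0-forcing set) of T. -/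
open SimpleGraph

section Aux

variable {V : Type*} (G : SimpleGraph V)

/-- Key tree lemma: for `u ≠ v`, all neighbors of `u` except one are "away" from `v`. -/
lemma tree_key (hT : G.IsTree) (v u : V) (huv : u ≠ v) :
    ∃ w0, G.Adj u w0 ∧ ∀ w, G.Adj u w → w ≠ w0 → G.dist w v = G.dist u v + 1 := by
  classical
  have hconn : G.Connected := hT.isConnected
  obtain ⟨P, hP, hPlen⟩ := hconn.exists_path_of_dist u v
  obtain ⟨w0, h0, q, rfl⟩ := Walk.exists_eq_cons_of_ne huv P
  rw [Walk.cons_isPath_iff] at hP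
  refine ⟨w0, h0, fun w hw hne => ?_⟩
  obtain ⟨R, hR, hRlen⟩ := hconn.exists_path_of_dist w v
  have hd1 : G.dist w u = 1 := dist_eq_one_iff_adj.mpr hw.symm
  have htr : G.dist w v ≤ G.dist w u + G.dist u v := hconn.dist_triangle
  by_cases hmem : u ∈ R.support
  · -- split R at u
    have hspec := R.take_spec hmem
    have hlen : (R.takeUntil u hmem).length + (R.dropUntil u hmem).length = R.length := by
      conv_rhs => rw [← hspec]
      rw [Walk.length_append]
    have h1 : G.dist u v ≤ (R.dropUntil u hmem).length := dist_le _
    have h2 : 1 ≤ (R.takeUntil u hmem).length := by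
      by_contra h
      have : (R.takeUntil u hmem).length = 0 := by omega
      exact (G.ne_of_adj hw).symm (Walk.eq_of_length_eq_zero this)
    omega
  · -- cons gives a second path from u to v
    have hQ : (R.cons hw).IsPath := (Walk.cons_isPath_iff hw R).mpr ⟨hR, hmem⟩
    have := hT.IsAcyclic.path_unique ⟨R.cons hw, hQ⟩ ⟨(q.cons h0), by rw [Walk.cons_isPath_iff]; exact hP⟩
    have hvert := congrArg (fun p : G.Path u v => (p : G.Walk u v).getVert 1) this
    simp only [Walk.getVert_cons_succ, Walk.getVert_zero] at hvert
    exact absurd hvert hne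

end Aux

theorem tree_all_but_one_leaf_zero_forcing {V : Type*} [Fintype V]
    (G : SimpleGraph V) [DecidableRel G.Adj] (hT : G.IsTree)
    (ht : 2 ≤ {v | G.degree v = 1}.ncard)
    (v : V) (hv : G.degree v = 1) :
    G.IsLeakyForcingSet 0 ({w | G.degree w = 1} \ {v}) := by
  have hconn : G.Connected := hT.isConnected
  intro L hL u
  have hL0 : (L : Set V) = (∅ : Set V) := by
    have : L = ∅ := Finset.card_eq_zero.mp (Nat.le_zero.mp hL)
    simp [this]
  rw [hL0]
  set S : Set V := {w | G.degree w = 1} \ {v} with hS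
  -- branch sets
  set B : V → Set V := fun u => {x | G.dist x v = G.dist x u + G.dist u v} with hB
  have hself : ∀ u, u ∈ B u := by intro u; simp [hB]
  have haway : ∀ u w, G.Adj u w → G.dist w v = G.dist u v + 1 →
      B w ⊆ B u ∧ u ∉ B w := by
    intro u w hadj hdw
    constructor
    · intro x hx
      simp only [hB, Set.mem_setOf_eq] at hx ⊢
      have h1 : G.dist x u ≤ G.dist x w + G.dist w u := hconn.dist_triangle
      have h2 : G.dist w u = 1 := dist_eq_one_iff_adj.mpr hadj.symm
      have h3 : G.dist x v ≤ G.dist x u + G.dist u v := hconn.dist_triangle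
      omega
    · simp only [hB, Set.mem_setOf_eq]
      have h2 : G.dist u w = 1 := dist_eq_one_iff_adj.mpr hadj
      omega
  have hlt : ∀ u w, G.Adj u w → G.dist w v = G.dist u v + 1 →
      (B w).ncard < (B u).ncard := by
    intro u w hadj hdw
    obtain ⟨hsub, hnot⟩ := haway u w hadj hdw
    exact Set.ncard_lt_ncard (Set.ssubset_iff_of_subset hsub |>.mpr ⟨u, hself u, hnot⟩)
      (Set.toFinite _)
  -- main induction
  suffices H : ∀ n, ∀ u : V, (B u).ncard ≤ n → G.LeakyForces (∅ : Set V) S u by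
    exact H _ u le_rfl
  intro n
  induction n with
  | zero =>
    intro u hu
    exact absurd hu (by
      have : (B u).Nonempty := ⟨u, hself u⟩
      have := Set.ncard_pos (Set.toFinite (B u)) |>.mpr this
      omega)
  | succ n ih =>
    intro u hu
    by_cases hmem : u ∈ S
    · exact .init u hmem
    -- u has an away neighbor
    have hex : ∃ w, G.Adj u w ∧ G.dist w v = G.dist u v + 1 := by
      by_cases huv : u = v
      · subst huv
        -- there is another vertex: another leaf
        obtain ⟨x, -, hx⟩ := Set.exists_ne_of_one_lt_ncard ht u
        have hd : 0 < G.dist u x := hconn.pos_dist_of_ne (Ne.symm hx)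
        obtain ⟨p, hp⟩ := hconn.exists_walk_length_eq_dist u x
        obtain ⟨w, hadj, q, rfl⟩ := Walk.exists_eq_cons_of_ne (Ne.symm hx) p
        refine ⟨w, hadj, ?_⟩
        have h1 : G.dist w u = 1 := dist_eq_one_iff_adj.mpr hadj.symm
        rw [SimpleGraph.dist_self, SimpleGraph.dist_comm] at *
        omega
      · obtain ⟨w0, hw0, hall⟩ := tree_key G hT v u huv
        -- u is not a leaf since u ∉ S and u ≠ v
        have hdeg : G.degree u ≠ 1 := by
          intro h1
          exact hmem ⟨h1, huv⟩
        have : ∃ w, G.Adj u w ∧ w ≠ w0 := by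
          by_contra h
          push_neg at h
          have : G.neighborFinset u = {w0} := by
            ext x
            simp only [mem_neighborFinset, Finset.mem_singleton]
            exact ⟨fun hx => h x hx, fun hx => hx ▸ hw0⟩
          exact hdeg (by rw [← card_neighborFinset_eq_degree, this, Finset.card_singleton])
        obtain ⟨w, hw, hne⟩ := this
        exact ⟨w, hw, hall w hw hne⟩
    obtain ⟨w, hadj, hdw⟩ := hex
    have hwv : w ≠ v := by
      intro h
      rw [h, SimpleGraph.dist_self] at hdw
      omega
    -- all neighbors of w other than u are away from w
    obtain ⟨w0, hw0, hall⟩ := tree_key G hT v w hwv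
    have huw0 : u = w0 := by
      by_contra h
      have := hall u hadj.symm h
      omega
    have hwforced : G.LeakyForces (∅ : Set V) S w :=
      ih w (by have := hlt u w hadj hdw; omega)
    refine .force w u (by simp) hwforced hadj.symm ?_
    intro x hx hxu
    have hdx : G.dist x v = G.dist w v + 1 := hall x hx (huw0 ▸ hxu)
    have h1 : (B x).ncard < (B w).ncard := hlt w x hx hdx
    have h2 : (B w).ncard < (B u).ncard := hlt u w hadj hdw
    exact ih x (by omega)
end

section
/- For the cycle C_n (n ≥ 3), the 1-forcing number equals 2; in fact any pair of adjacent vertices forms a 1-forcing set. -/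
open SimpleGraph

open Fin.CommRing Fin.NatCast

private lemma cycAdj (m : ℕ) {a b : Fin (m+3)} :
    (cycleGraph (m+3)).Adj a b ↔ a - b = 1 ∨ b - a = 1 := by
  rw [show m + 3 = (m+1) + 2 by ring] at *
  exact cycleGraph_adj

private lemma cycAdj_succ (m : ℕ) (a : Fin (m+3)) : (cycleGraph (m+3)).Adj a (a+1) := by
  rw [cycAdj]; right; ring

/-- Forward chain lemma. -/
private lemma fwd (m : ℕ) (u : Fin (m+3)) (L : Set (Fin (m+3))) (k : ℕ)
    (h : ∀ j : ℕ, 1 ≤ j → j < k + 1 → (u + (j : Fin (m+3))) ∉ L) :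
    (cycleGraph (m+3)).LeakyForces L {u, u+1} (u + (k : Fin (m+3))) ∧
    (cycleGraph (m+3)).LeakyForces L {u, u+1} (u + ((k+1 : ℕ) : Fin (m+3))) := by
  induction k with
  | zero =>
    constructor
    · exact .init _ (by simp)
    · exact .init _ (by norm_num)
  | succ k ih =>
    obtain ⟨h1, h2⟩ := ih (fun j hj hjk => h j hj (by omega))
    refine ⟨h2, ?_⟩
    refine .force (u + ((k+1 : ℕ) : Fin (m+3))) _ (h (k+1) (by omega) (by omega)) h2 ?_ ?_
    · rw [cycAdj]; right; push_cast; ring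
    · intro w hw hne
      rw [cycAdj] at hw
      rcases hw with hw | hw
      · have : w = u + (k : Fin (m+3)) := by push_cast at hw ⊢; linear_combination -hw
        rw [this]; exact h1
      · exact absurd (by push_cast at hw ⊢; linear_combination hw) hne

/-- Backward chain lemma. -/
private lemma bwd (m : ℕ) (u : Fin (m+3)) (L : Set (Fin (m+3))) (k : ℕ)
    (h : ∀ j : ℕ, j < k → (u - (j : Fin (m+3))) ∉ L) :
    (cycleGraph (m+3)).LeakyForces L {u, u+1} (u - (k : Fin (m+3))) ∧
    (cycleGraph (m+3)).LeakyForces L {u, u+1} (u - (k : Fin (m+3)) + 1) := by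
  induction k with
  | zero =>
    constructor
    · exact .init _ (by simp)
    · exact .init _ (by norm_num)
  | succ k ih =>
    obtain ⟨h1, h2⟩ := ih (fun j hjk => h j (by omega))
    have hstep : (cycleGraph (m+3)).LeakyForces L {u, u+1} (u - ((k+1 : ℕ) : Fin (m+3))) := by
      refine .force (u - (k : Fin (m+3))) _ (h k (by omega)) h1 ?_ ?_
      · rw [cycAdj]; left; push_cast; ring
      · intro w hw hne
        rw [cycAdj] at hw
        rcases hw with hw | hw
        · exact absurd (by push_cast at hw ⊢; linear_combination -hw) hne
        · have : w = u - (k : Fin (m+3)) + 1 := by linear_combination hw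
          rw [this]; exact h2
    refine ⟨hstep, ?_⟩
    have : u - ((k+1 : ℕ) : Fin (m+3)) + 1 = u - (k : Fin (m+3)) := by push_cast; ring
    rw [this]; exact h1

private lemma fwd' (m : ℕ) (u : Fin (m+3)) (L : Set (Fin (m+3))) (k : ℕ)
    (h : ∀ j : ℕ, 1 ≤ j → j < k → (u + (j : Fin (m+3))) ∉ L) :
    (cycleGraph (m+3)).LeakyForces L {u, u+1} (u + (k : Fin (m+3))) := by
  cases k with
  | zero => exact .init _ (by simp)
  | succ k => exact (fwd m u L k (fun j hj hjk => h j hj hjk)).2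

/-- Any adjacent pair {u, u+1} is a 1-forcing set in the cycle. -/
private lemma key (m : ℕ) (u : Fin (m+3)) :
    (cycleGraph (m+3)).IsLeakyForcingSet 1 {u, u+1} := by
  intro L hL v
  have hv : v = u + (((v - u : Fin (m+3)) : ℕ) : Fin (m+3)) := by
    rw [Fin.cast_val_eq_self]; ring
  set k : ℕ := ((v - u : Fin (m+3)) : ℕ) with hk
  have hkn : k < m + 3 := (v - u).isLt
  rcases (Finset.card_le_one_iff_subset_singleton.mp hL) with ⟨l, hLsub⟩
  by_cases hlL : l ∈ L
  · -- L = {l}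
    have hLL : (L : Set (Fin (m+3))) = {l} := by
      apply Set.Subset.antisymm
      · intro x hx
        have := hLsub hx
        simpa using this
      · intro x hx
        simp at hx
        subst hx; exact_mod_cast hlL
    set m₀ : ℕ := ((l - u : Fin (m+3)) : ℕ) with hm₀
    have hm₀n : m₀ < m + 3 := (l - u).isLt
    have hl : l = u + ((m₀ : ℕ) : Fin (m+3)) := by
      rw [hm₀, Fin.cast_val_eq_self]; ring
    by_cases hcase : m₀ = 0 ∨ k ≤ m₀
    · rw [hv]
      apply fwd'
      intro j hj hjk
      rw [hLL]
      simp only [Set.mem_singleton_iff]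
      intro hcontra
      rw [hl] at hcontra
      have hj2 : j < m + 3 := by omega
      have : j = m₀ := by
        have := add_left_cancel hcontra
        have := congrArg Fin.val this
        rwa [Fin.val_cast_of_lt hj2, Fin.val_cast_of_lt hm₀n] at this
      omega
    · push_neg at hcase
      obtain ⟨hm₀pos, hkm₀⟩ := hcase
      have hm₀pos' : 1 ≤ m₀ := Nat.one_le_iff_ne_zero.mpr hm₀pos
      -- use backward with d = (m+3) - k
      set d : ℕ := (m + 3) - k with hd
      have hvd : v = u - ((d : ℕ) : Fin (m+3)) := by
        rw [hv, hd]
        have : (((m + 3 - k : ℕ) : Fin (m+3))) = - ((k : ℕ) : Fin (m+3)) := by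
          have : ((m + 3 - k : ℕ) : Fin (m+3)) + ((k : ℕ) : Fin (m+3)) = 0 := by
            rw [← Nat.cast_add]
            rw [show m + 3 - k + k = m + 3 by omega]
            exact_mod_cast Fin.natCast_self (m+3)
          linear_combination this
        rw [this]; ring
      rw [hvd]
      exact (bwd m u (↑L) d (by
        intro j hjd
        rw [hLL]
        simp only [Set.mem_singleton_iff]
        intro hcontra
        rw [hl] at hcontra
        -- u - j = u + m₀  →  j + m₀ ≡ 0
        have hsum : ((j : Fin (m+3))) + ((m₀ : ℕ) : Fin (m+3)) = 0 := by
          linear_combination -hcontra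
        rw [← Nat.cast_add] at hsum
        have hjn : j + m₀ < 2 * (m + 3) := by omega
        have hzero : ((j + m₀ : ℕ) : Fin (m+3)) = ((0 : ℕ) : Fin (m+3)) := by
          simpa using hsum
        have hlt : j + m₀ < m + 3 := by omega
        have hval : j + m₀ = 0 := by
          have := congrArg Fin.val hsum
          rwa [Fin.val_cast_of_lt hlt, Fin.val_zero] at this
        omega)).1
  · -- L = ∅ (as a set)
    have hLL : (L : Set (Fin (m+3))) = ∅ := by
      ext x
      simp only [Finset.coe_sort_coe, Set.mem_empty_iff_false, iff_false, Finset.mem_coe]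
      intro hx
      have := hLsub hx
      simp at this
      subst this
      exact hlL hx
    rw [hv]
    apply fwd'
    intro j _ _
    rw [hLL]
    exact Set.notMem_empty _

private lemma not_forced_empty {m : ℕ} {L : Set (Fin (m+3))} (v : Fin (m+3))
    (h : (cycleGraph (m+3)).LeakyForces L (↑(∅ : Finset (Fin (m+3)))) v) : False := by
  induction h with
  | init v hv => simpa using hv
  | force u v hu hcu huv hall ih _ => exact ih

private lemma forced_singleton {m : ℕ} {s : Fin (m+3)} {v : Fin (m+3)}
    (h : (cycleGraph (m+3)).LeakyForces (↑({s} : Finset (Fin (m+3)))) (↑({s} : Finset (Fin (m+3)))) v) :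
    v = s := by
  induction h with
  | init v hv => simpa using hv
  | force u v hu hcu huv hall ih _ =>
    exact absurd (by simp [ih]) hu

theorem cycle_one_forcing (n : ℕ) (hn : 3 ≤ n) :
    (SimpleGraph.cycleGraph n).leakyForcingNumber 1 = 2 ∧
    ∀ u v : Fin n, (SimpleGraph.cycleGraph n).Adj u v →
      (SimpleGraph.cycleGraph n).IsLeakyForcingSet 1 {u, v} := by
  obtain ⟨m, rfl⟩ : ∃ m, n = m + 3 := ⟨n - 3, by omega⟩
  have hpair : ∀ u v : Fin (m+3), (cycleGraph (m+3)).Adj u v →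
      (cycleGraph (m+3)).IsLeakyForcingSet 1 {u, v} := by
    intro u v huv
    rw [cycAdj] at huv
    rcases huv with h | h
    · -- u - v = 1, i.e. u = v + 1
      have hu : u = v + 1 := by linear_combination h
      have := key m v
      rw [show ({u, v} : Set (Fin (m+3))) = {v, v + 1} by rw [hu, Set.pair_comm]]
      exact this
    · have hv : v = u + 1 := by linear_combination h
      rw [hv]
      exact key m u
  constructor
  · -- leakyForcingNumber = 2
    unfold SimpleGraph.leakyForcingNumber
    have h2 : 2 ∈ {k | ∃ S : Finset (Fin (m+3)), S.card = k ∧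
        (cycleGraph (m+3)).IsLeakyForcingSet 1 ↑S} := by
      refine ⟨{0, 1}, ?_, ?_⟩
      · rw [Finset.card_pair]; norm_num
      · have := hpair 0 1 (by simpa using cycAdj_succ m 0)
        simpa using this
    apply le_antisymm
    · exact Nat.sInf_le h2
    · apply le_csInf ⟨2, h2⟩
      rintro k ⟨S, hcard, hforce⟩
      by_contra hlt
      push_neg at hlt
      interval_cases k
      · -- S = ∅
        have hS : S = ∅ := Finset.card_eq_zero.mp hcard
        subst hS
        exact not_forced_empty (0 : Fin (m+3)) (hforce ∅ (by simp) 0)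
      · -- S = {s}
        obtain ⟨s, hS⟩ := Finset.card_eq_one.mp hcard
        subst hS
        obtain ⟨v, hv⟩ := exists_ne s
        exact hv (forced_singleton (hforce {s} (by simp) v))
  · exact hpair
end

section
/- For the cycle C_n (n ≥ 3) and any ℓ ≥ 2, the ℓ-forcing number equals n. -/
open SimpleGraph

theorem cycle_ell_forcing (n : ℕ) (hn : 3 ≤ n) (ℓ : ℕ) (hℓ : 2 ≤ ℓ) :
    (SimpleGraph.cycleGraph n).leakyForcingNumber ℓ = n := by
  obtain ⟨m, rfl⟩ : ∃ m, n = m + 2 := ⟨n - 2, by omega⟩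
  set G := SimpleGraph.cycleGraph (m + 2) with hG
  have hmem : (m + 2) ∈ {k | ∃ S : Finset (Fin (m + 2)), S.card = k ∧
      G.IsLeakyForcingSet ℓ ↑S} := by
    refine ⟨Finset.univ, by simp, fun L hL v => ?_⟩
    exact SimpleGraph.LeakyForces.init v (by simp)
  unfold SimpleGraph.leakyForcingNumber
  apply le_antisymm
  · exact Nat.sInf_le hmem
  · refine le_csInf ⟨_, hmem⟩ ?_
    rintro k ⟨S, rfl, hS⟩
    have hSuniv : S = Finset.univ := by
      rw [Finset.eq_univ_iff_forall]
      intro v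
      by_contra hv
      have hcard : ({v - 1, v + 1} : Finset (Fin (m + 2))).card ≤ ℓ :=
        le_trans (le_trans (Finset.card_insert_le _ _) (by simp)) hℓ
      have h := hS {v - 1, v + 1} hcard v
      cases h with
      | init _ hv' => exact hv hv'
      | force u _ hu _ huv _ =>
        apply hu
        rw [hG, SimpleGraph.cycleGraph_adj] at huv
        simp only [Finset.coe_insert, Finset.coe_singleton, Set.mem_insert_iff,
          Set.mem_singleton_iff]
        rcases huv with h1 | h1
        · right; exact sub_eq_iff_eq_add'.mp h1
        · left; rw [sub_eq_iff_eq_add.mp h1]; abel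
    simp [hSuniv]
end

section
/- For the wheel graph W_n (n ≥ 4) with one leak, the set consisting of the hub vertex and two adjacent rim vertices is a 1-forcing set, so Z_{(1)}(W_n) ≤ 3. -/
open SimpleGraph

/-- The wheel graph `W_n`: a cycle `C_n` (the rim, vertices `some i`) together with a
hub vertex (`none`) adjacent to every rim vertex. -/
def wheelGraph (n : ℕ) : SimpleGraph (Option (Fin n)) where
  Adj u v :=
    (u = none ∧ v ≠ none) ∨ (v = none ∧ u ≠ none) ∨
      (∃ i j, u = some i ∧ v = some j ∧ (SimpleGraph.cycleGraph n).Adj i j)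
  symm := by
    constructor
    rintro u v (⟨h1, h2⟩ | ⟨h1, h2⟩ | ⟨i, j, h1, h2, h3⟩)
    · exact Or.inr (Or.inl ⟨h1, h2⟩)
    · exact Or.inl ⟨h1, h2⟩
    · exact Or.inr (Or.inr ⟨j, i, h2, h1, h3.symm⟩)
  loopless := by
    constructor
    rintro u (⟨h1, h2⟩ | ⟨h1, h2⟩ | ⟨i, j, h1, h2, h3⟩)
    · exact h2 h1
    · exact h2 h1
    · rw [h1] at h2
      cases h2
      exact (SimpleGraph.irrefl _) h3

open Fin.CommRing

section Aux

variable {n : ℕ} [NeZero n]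

lemma WheelAux.fin_one_val (hn : 2 ≤ n) : (1 : Fin n).val = 1 := by
  simp [Fin.val_one', Nat.mod_eq_of_lt hn]

omit [NeZero n] in
lemma WheelAux.adj_hub (x : Fin n) : (wheelGraph n).Adj (some x) none :=
  Or.inr (Or.inl ⟨rfl, by simp⟩)

lemma WheelAux.adj_succ (hn : 4 ≤ n) (x : Fin n) :
    (wheelGraph n).Adj (some x) (some (x + 1)) := by
  refine Or.inr (Or.inr ⟨x, x + 1, rfl, rfl, ?_⟩)
  rw [cycleGraph_adj']
  right
  rw [add_sub_cancel_left]
  exact WheelAux.fin_one_val (by omega)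

lemma WheelAux.adj_pred (hn : 4 ≤ n) (x : Fin n) :
    (wheelGraph n).Adj (some x) (some (x - 1)) := by
  refine Or.inr (Or.inr ⟨x, x - 1, rfl, rfl, ?_⟩)
  rw [cycleGraph_adj']
  left
  rw [sub_sub_cancel]
  exact WheelAux.fin_one_val (by omega)

lemma WheelAux.adj_classify (hn : 4 ≤ n) {x : Fin n} {w : Option (Fin n)}
    (h : (wheelGraph n).Adj (some x) w) :
    w = none ∨ w = some (x + 1) ∨ w = some (x - 1) := by
  have h1 : (1 : Fin n).val = 1 := WheelAux.fin_one_val (by omega)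
  rcases h with ⟨hc, _⟩ | ⟨hc, _⟩ | ⟨i, j, hi, hj, hadj⟩
  · exact absurd hc (by simp)
  · exact Or.inl hc
  · cases hi
    rw [cycleGraph_adj'] at hadj
    rcases hadj with hh | hh
    · right; right
      rw [hj]
      congr 1
      have : x - j = 1 := Fin.ext (by rw [h1]; exact hh)
      linear_combination -this
    · right; left
      rw [hj]
      congr 1
      have : j - x = 1 := Fin.ext (by rw [h1]; exact hh)
      linear_combination this

variable {L S : Set (Option (Fin n))}

lemma WheelAux.force_next (hn : 4 ≤ n)
    (hnone : (wheelGraph n).LeakyForces L S none) (x : Fin n)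
    (hxL : some x ∉ L) (hx : (wheelGraph n).LeakyForces L S (some x))
    (hprev : (wheelGraph n).LeakyForces L S (some (x - 1))) :
    (wheelGraph n).LeakyForces L S (some (x + 1)) := by
  refine LeakyForces.force (some x) (some (x + 1)) hxL hx (WheelAux.adj_succ hn x) ?_
  intro w hw hne
  rcases WheelAux.adj_classify hn hw with rfl | rfl | rfl
  · exact hnone
  · exact absurd rfl hne
  · exact hprev

lemma WheelAux.force_prev (hn : 4 ≤ n)
    (hnone : (wheelGraph n).LeakyForces L S none) (x : Fin n)
    (hxL : some x ∉ L) (hx : (wheelGraph n).LeakyForces L S (some x))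
    (hnext : (wheelGraph n).LeakyForces L S (some (x + 1))) :
    (wheelGraph n).LeakyForces L S (some (x - 1)) := by
  refine LeakyForces.force (some x) (some (x - 1)) hxL hx (WheelAux.adj_pred hn x) ?_
  intro w hw hne
  rcases WheelAux.adj_classify hn hw with rfl | rfl | rfl
  · exact hnone
  · exact hnext
  · exact absurd rfl hne

lemma WheelAux.fwd (hn : 4 ≤ n)
    (hnone : (wheelGraph n).LeakyForces L S none) (a : Fin n)
    (ha : (wheelGraph n).LeakyForces L S (some a))
    (hb : (wheelGraph n).LeakyForces L S (some (a + 1))) :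
    ∀ k : ℕ, (∀ j : ℕ, 1 ≤ j → j ≤ k → some (a + (j : Fin n)) ∉ L) →
      (wheelGraph n).LeakyForces L S (some (a + (k : Fin n))) ∧
      (wheelGraph n).LeakyForces L S (some (a + (k : Fin n) + 1)) := by
  intro k
  induction k with
  | zero => exact fun _ => ⟨by simpa using ha, by simpa using hb⟩
  | succ k ih =>
    intro h
    have ih' := ih (fun j h1 h2 => h j h1 (by omega))
    have hcast : ((k + 1 : ℕ) : Fin n) = (k : Fin n) + 1 := by push_cast; ring
    rw [hcast, ← add_assoc]
    refine ⟨ih'.2, ?_⟩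
    refine WheelAux.force_next hn hnone (a + (k : Fin n) + 1) ?_ ih'.2 ?_
    · have := h (k + 1) (by omega) le_rfl
      rwa [hcast, ← add_assoc] at this
    · rw [add_sub_cancel_right]; exact ih'.1

lemma WheelAux.bwd (hn : 4 ≤ n)
    (hnone : (wheelGraph n).LeakyForces L S none) (a : Fin n)
    (ha : (wheelGraph n).LeakyForces L S (some a))
    (hb : (wheelGraph n).LeakyForces L S (some (a + 1))) :
    ∀ k : ℕ, (∀ j : ℕ, j ≤ k → some (a - (j : Fin n)) ∉ L) →
      (wheelGraph n).LeakyForces L S (some (a - (k : Fin n))) ∧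
      (wheelGraph n).LeakyForces L S (some (a - (k : Fin n) - 1)) := by
  intro k
  induction k with
  | zero =>
    intro h
    refine ⟨by simpa using ha, ?_⟩
    have h0 : some a ∉ L := by simpa using h 0 le_rfl
    have := WheelAux.force_prev hn hnone a h0 ha hb
    simpa using this
  | succ k ih =>
    intro h
    have ih' := ih (fun j hj => h j (by omega))
    have hcast : ((k + 1 : ℕ) : Fin n) = (k : Fin n) + 1 := by push_cast; ring
    rw [hcast, sub_add_eq_sub_sub]
    refine ⟨ih'.2, ?_⟩
    have hre := WheelAux.force_prev hn hnone (a - (k : Fin n) - 1) ?_ ih'.2 ?_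
    · exact hre
    · have := h (k + 1) le_rfl
      rwa [hcast, sub_add_eq_sub_sub] at this
    · rw [sub_add_cancel]; exact ih'.1

end Aux

lemma WheelAux.main {n : ℕ} [NeZero n] (hn : 4 ≤ n) (a : Fin n)
    (S : Set (Option (Fin n))) (hS0 : none ∈ S) (hSa : some a ∈ S)
    (hSb : some (a + 1) ∈ S) (L : Finset (Option (Fin n))) (hL : L.card ≤ 1) :
    ∀ w, (wheelGraph n).LeakyForces (↑L) S w := by
  have hnone : (wheelGraph n).LeakyForces (↑L) S none := .init _ hS0
  have ha : (wheelGraph n).LeakyForces (↑L) S (some a) := .init _ hSa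
  have hb : (wheelGraph n).LeakyForces (↑L) S (some (a + 1)) := .init _ hSb
  have reachF : ∀ t : ℕ, (∀ j : ℕ, 1 ≤ j → j < t → some (a + (j : Fin n)) ∉ (↑L : Set _)) →
      (wheelGraph n).LeakyForces (↑L) S (some (a + (t : Fin n))) := by
    intro t h
    match t with
    | 0 => simpa using ha
    | t + 1 =>
      have := (WheelAux.fwd hn hnone a ha hb t (fun j h1 h2 => h j h1 (by omega))).2
      have hcast : ((t + 1 : ℕ) : Fin n) = (t : Fin n) + 1 := by push_cast; ring
      rw [hcast, ← add_assoc]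
      exact this
  intro w
  match w with
  | none => exact hnone
  | some x =>
    obtain ⟨t, htn, hxa⟩ : ∃ t : ℕ, t < n ∧ a + (t : Fin n) = x :=
      ⟨(x - a).val, (x - a).isLt, by rw [Fin.cast_val_eq_self]; ring⟩
    by_cases hrim : ∃ ℓ : Fin n, some ℓ ∈ L
    · obtain ⟨ℓ, hℓ⟩ := hrim
      have hmem : ∀ y ∈ L, y = some ℓ := fun y hy => Finset.card_le_one.mp hL y hy _ hℓ
      obtain ⟨m, hmn, hℓa⟩ : ∃ m : ℕ, m < n ∧ a + (m : Fin n) = ℓ :=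
        ⟨(ℓ - a).val, (ℓ - a).isLt, by rw [Fin.cast_val_eq_self]; ring⟩
      by_cases hcase : t ≤ m
      · -- forward chain suffices (also covers m = 0 only when t = 0)
        rw [← hxa]
        apply reachF t
        intro j h1 h2 hjL
        have hje := hmem _ hjL
        rw [Option.some_inj, ← hℓa] at hje
        have hv : j % n = m % n := congrArg Fin.val (add_left_cancel hje)
        rw [Nat.mod_eq_of_lt (by omega), Nat.mod_eq_of_lt (by omega)] at hv
        omega
      · push_neg at hcase
        by_cases hm0 : m = 0
        · -- leak is at a itself: forward chain all the way
          rw [← hxa]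
          apply reachF t
          intro j h1 h2 hjL
          have hje := hmem _ hjL
          rw [Option.some_inj, ← hℓa] at hje
          have hv : j % n = m % n := congrArg Fin.val (add_left_cancel hje)
          rw [Nat.mod_eq_of_lt (by omega), Nat.mod_eq_of_lt (by omega)] at hv
          omega
        · -- t > m ≥ 1 : backward chain
          have hbwd := (WheelAux.bwd hn hnone a ha hb (n - t - 1) ?_).2
          · have h1 : ((n - t - 1 : ℕ) : Fin n) + 1 = ((n - t : ℕ) : Fin n) := by
              have he : (n - t - 1) + 1 = n - t := by omega
              rw [← he]; push_cast; ring
            have h2 : ((n - t : ℕ) : Fin n) + ((t : ℕ) : Fin n) = 0 := by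
              rw [← Nat.cast_add]
              have he : n - t + t = n := by omega
              rw [he, Fin.natCast_self]
            have h3 : a - ((n - t - 1 : ℕ) : Fin n) - 1 = x := by
              rw [sub_sub, h1, ← hxa]
              linear_combination -h2
            rwa [h3] at hbwd
          · intro j hj hjL
            have hje := hmem _ hjL
            rw [Option.some_inj, ← hℓa] at hje
            have h4 : ((j + m : ℕ) : Fin n) = 0 := by
              push_cast
              linear_combination -hje
            rw [Fin.natCast_eq_zero] at h4
            have h5 := Nat.le_of_dvd (by omega) h4
            omega
    · push_neg at hrim
      rw [← hxa]
      apply reachF t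
      intro j _ _ hjL
      exact hrim _ hjL

theorem wheel_hub_two_rim_one_forcing (n : ℕ) (hn : 4 ≤ n) :
    (∀ u v : Fin n, (SimpleGraph.cycleGraph n).Adj u v →
      (wheelGraph n).IsLeakyForcingSet 1 {none, some u, some v}) ∧
    (wheelGraph n).leakyForcingNumber 1 ≤ 3 := by
  haveI : NeZero n := ⟨by omega⟩
  have h1 : (1 : Fin n).val = 1 := WheelAux.fin_one_val (by omega)
  have key : ∀ u v : Fin n, (SimpleGraph.cycleGraph n).Adj u v →
      (wheelGraph n).IsLeakyForcingSet 1 {none, some u, some v} := by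
    intro u v huv L hL w
    rw [cycleGraph_adj'] at huv
    rcases huv with hh | hh
    · -- u - v = 1, i.e. u = v + 1
      have hv : u = v + 1 := by
        have : u - v = 1 := Fin.ext (by rw [h1]; exact hh)
        linear_combination this
      exact WheelAux.main hn v _ (by simp) (by simp) (by rw [← hv]; simp) L hL w
    · have hv : v = u + 1 := by
        have : v - u = 1 := Fin.ext (by rw [h1]; exact hh)
        linear_combination this
      exact WheelAux.main hn u _ (by simp) (by simp) (by rw [← hv]; simp) L hL w
  refine ⟨key, ?_⟩
  apply Nat.sInf_le
  refine ⟨{none, some 0, some 1}, ?_, ?_⟩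
  · have h01 : (0 : Fin n) ≠ 1 := by
      intro h
      have := congrArg Fin.val h
      rw [h1] at this
      simp at this
    rw [Finset.card_insert_of_notMem (by simp), Finset.card_insert_of_notMem (by simp [h01]),
      Finset.card_singleton]
  · have hadj : (SimpleGraph.cycleGraph n).Adj 0 1 := by
      rw [cycleGraph_adj']
      right
      rw [sub_zero]
      exact h1
    have := key 0 1 hadj
    simpa using this
end

section
/- For the wheel graph W_n with n ≥ 4, the 2-forcing number of W_n equals ⌈2n/3⌉ + 1. -/
open SimpleGraph

/-- fort lemma -/
lemma fort_lemma {V : Type*} (G : SimpleGraph V) (L S F : Set V)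
    (hFS : ∀ v ∈ F, v ∉ S)
    (hfort : ∀ u v, u ∉ F → u ∉ L → v ∈ F → G.Adj u v →
      ∃ w, w ∈ F ∧ w ≠ v ∧ G.Adj u w) :
    ∀ v, G.LeakyForces L S v → v ∉ F := by
  intro v h
  induction h with
  | init v hv => exact fun hF => hFS v hF hv
  | force u v hu hcu huv hall ihu ihall =>
    intro hvF
    obtain ⟨w, hwF, hwv, huw⟩ := hfort u v ihu hu hvF huv
    exact ihall w huw hwv hwF

section FinFacts
variable {m : ℕ}

lemma vadd1 (i : Fin (m+4)) :
    (i.1 = m+3 ∧ ((i+1 : Fin (m+4)) : ℕ) = 0) ∨ (i.1 < m+3 ∧ ((i+1 : Fin (m+4)) : ℕ) = i.1 + 1) := by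
  rcases eq_or_ne i (Fin.last (m+3)) with h | h
  · left; rw [Fin.val_add_one, if_pos h, h]; exact ⟨rfl, rfl⟩
  · right
    have : i.1 < m + 3 := lt_of_le_of_ne (Nat.lt_succ_iff.mp i.2) (fun hc => h (Fin.ext hc))
    rw [Fin.val_add_one, if_neg h]
    exact ⟨this, rfl⟩

lemma vsub1 (i : Fin (m+4)) :
    (i.1 = 0 ∧ ((i-1 : Fin (m+4)) : ℕ) = m+3) ∨ (0 < i.1 ∧ ((i-1 : Fin (m+4)) : ℕ) = i.1 - 1) := by
  rcases eq_or_ne i 0 with h | h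
  · left; rw [Fin.coe_sub_one, if_pos h, h]; exact ⟨rfl, rfl⟩
  · right
    have : 0 < i.1 := Nat.pos_of_ne_zero (fun hc => h (Fin.ext hc))
    rw [Fin.coe_sub_one, if_neg h]
    exact ⟨this, rfl⟩

lemma fin_eq_iff (i j : Fin (m+4)) : i = j ↔ i.1 = j.1 := Fin.ext_iff

/-- wheel adjacency characterizations -/
lemma wheel_adj_some_some {i j : Fin (m+4)} :
    (wheelGraph (m+4)).Adj (some i) (some j) ↔ i = j + 1 ∨ j = i + 1 := by
  constructor
  · rintro (⟨h1, _⟩ | ⟨h1, _⟩ | ⟨a, b, ha, hb, hab⟩)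
    · exact absurd h1 (by simp)
    · exact absurd h1 (by simp)
    · cases ha; cases hb
      rw [SimpleGraph.cycleGraph_adj'] at hab
      rcases hab with h | h
      · left
        have : i - j = 1 := Fin.ext (by rw [h]; exact (Fin.val_one _).symm)
        exact sub_eq_iff_eq_add'.mp this
      · right
        have : j - i = 1 := Fin.ext (by rw [h]; exact (Fin.val_one _).symm)
        exact sub_eq_iff_eq_add'.mp this
  · intro h
    refine Or.inr (Or.inr ⟨i, j, rfl, rfl, ?_⟩)
    rw [SimpleGraph.cycleGraph_adj']
    rcases h with h | h
    · left; rw [sub_eq_iff_eq_add'.mpr h]; exact Fin.val_one _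
    · right; rw [sub_eq_iff_eq_add'.mpr h]; exact Fin.val_one _

lemma wheel_adj_none_some {i : Fin (m+4)} : (wheelGraph (m+4)).Adj none (some i) :=
  Or.inl ⟨rfl, by simp⟩

lemma wheel_adj_some_none {i : Fin (m+4)} : (wheelGraph (m+4)).Adj (some i) none :=
  Or.inr (Or.inl ⟨rfl, by simp⟩)

lemma wheel_adj_some_iff {i : Fin (m+4)} {w : Option (Fin (m+4))} :
    (wheelGraph (m+4)).Adj (some i) w ↔ w = none ∨ w = some (i+1) ∨ w = some (i-1) := by
  cases w with
  | none => simp [wheel_adj_some_none]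
  | some j =>
    rw [wheel_adj_some_some]
    constructor
    · rintro (h | h)
      · right; right
        rw [eq_sub_iff_add_eq.mpr h.symm]
      · right; left; rw [h]
    · rintro (h | h | h)
      · exact absurd h (by simp)
      · right; exact (Option.some_inj.mp h)
      · left; exact (eq_sub_iff_add_eq.mp (Option.some_inj.mp h)).symm
  
lemma wheel_adj_none_iff {w : Option (Fin (m+4))} :
    (wheelGraph (m+4)).Adj none w ↔ ∃ j, w = some j := by
  cases w with
  | none => simp [SimpleGraph.irrefl]
  | some j => simp [wheel_adj_none_some]

end FinFacts

section Forcing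
variable {m : ℕ} {L S : Set (Option (Fin (m+4)))}

lemma fin_ne_add_one (i : Fin (m+4)) : i ≠ i + 1 := by
  intro h
  rcases vadd1 i with ⟨h1, h2⟩ | ⟨h1, h2⟩ <;>
    (rw [fin_eq_iff] at h; omega)

lemma fin_sub_one_ne_add_one (i : Fin (m+4)) : i - 1 ≠ i + 1 := by
  intro h
  rw [fin_eq_iff] at h
  rcases vadd1 i with ⟨h1, h2⟩ | ⟨h1, h2⟩ <;> rcases vsub1 i with ⟨h3, h4⟩ | ⟨h3, h4⟩ <;> omega

lemma fin_ne_sub_one (i : Fin (m+4)) : i ≠ i - 1 := by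
  intro h
  rcases vsub1 i with ⟨h1, h2⟩ | ⟨h1, h2⟩ <;> (rw [fin_eq_iff] at h; omega)

lemma force_up {u : Fin (m+4)} (hu : some u ∉ L)
    (h1 : (wheelGraph (m+4)).LeakyForces L S (some u))
    (h2 : (wheelGraph (m+4)).LeakyForces L S none)
    (h3 : (wheelGraph (m+4)).LeakyForces L S (some (u-1))) :
    (wheelGraph (m+4)).LeakyForces L S (some (u+1)) := by
  refine .force (some u) _ hu h1 (wheel_adj_some_some.mpr (Or.inr rfl)) ?_
  intro w hw hne
  rcases wheel_adj_some_iff.mp hw with rfl | rfl | rfl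
  · exact h2
  · exact absurd rfl hne
  · exact h3

lemma force_down {u : Fin (m+4)} (hu : some u ∉ L)
    (h1 : (wheelGraph (m+4)).LeakyForces L S (some u))
    (h2 : (wheelGraph (m+4)).LeakyForces L S none)
    (h3 : (wheelGraph (m+4)).LeakyForces L S (some (u+1))) :
    (wheelGraph (m+4)).LeakyForces L S (some (u-1)) := by
  refine .force (some u) _ hu h1 (wheel_adj_some_some.mpr (Or.inl (sub_add_cancel u 1).symm)) ?_
  intro w hw hne
  rcases wheel_adj_some_iff.mp hw with rfl | rfl | rfl
  · exact h2
  · exact h3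
  · exact absurd rfl hne

lemma force_hub {d : Fin (m+4)} (hnL : none ∉ L)
    (h1 : (wheelGraph (m+4)).LeakyForces L S none)
    (hall : ∀ j, j ≠ d → (wheelGraph (m+4)).LeakyForces L S (some j)) :
    (wheelGraph (m+4)).LeakyForces L S (some d) := by
  refine .force none _ hnL h1 wheel_adj_none_some ?_
  intro w hw hne
  obtain ⟨j, rfl⟩ := wheel_adj_none_iff.mp hw
  exact hall j (fun h => hne (by rw [h]))

end Forcing
section Upper
variable {m : ℕ}

def goodSet (m : ℕ) : Finset (Option (Fin (m+4))) :=
  insert none ((Finset.univ.filter (fun i : Fin (m+4) => ¬ i.1 % 3 = 2)).image some)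

lemma mem_goodSet_some {i : Fin (m+4)} (h : ¬ i.1 % 3 = 2) :
    some i ∈ (↑(goodSet m) : Set (Option (Fin (m+4)))) := by
  simp [goodSet, h]

lemma mem_goodSet_none : none ∈ (↑(goodSet m) : Set (Option (Fin (m+4)))) := by
  simp [goodSet]

lemma card_mod3 : (Finset.univ.filter (fun i : Fin (m+4) => i.1 % 3 = 2)).card = (m+4)/3 := by
  have himg : Finset.univ.filter (fun i : Fin (m+4) => i.1 % 3 = 2)
      = (Finset.range ((m+4)/3)).image
        (fun k => (⟨(3*k+2) % (m+4), Nat.mod_lt _ (by omega)⟩ : Fin (m+4))) := by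
    ext i
    simp only [Finset.mem_filter, Finset.mem_univ, true_and, Finset.mem_image, Finset.mem_range]
    constructor
    · intro h
      have h2 := i.2
      refine ⟨i.1/3, by omega, ?_⟩
      apply Fin.ext
      simp only
      have hlt : 3*(i.1/3)+2 < m+4 := by omega
      rw [Nat.mod_eq_of_lt hlt]
      omega
    · rintro ⟨k, hk, rfl⟩
      simp only
      have hlt : 3*k+2 < m+4 := by omega
      rw [Nat.mod_eq_of_lt hlt]
      omega
  rw [himg, Finset.card_image_of_injOn, Finset.card_range]
  intro a ha b hb hab
  simp only [Finset.coe_range, Set.mem_Iio] at ha hb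
  have h := congrArg Fin.val hab
  simp only at h
  rw [Nat.mod_eq_of_lt (by omega : 3*a+2 < m+4), Nat.mod_eq_of_lt (by omega : 3*b+2 < m+4)] at h
  omega

lemma goodSet_card : (goodSet m).card = (2*(m+4)+2)/3 + 1 := by
  rw [goodSet, Finset.card_insert_of_notMem (by simp),
    Finset.card_image_of_injective _ (Option.some_injective _)]
  have h1 := Finset.card_filter_add_card_filter_not
    (s := (Finset.univ : Finset (Fin (m+4)))) (p := fun i => i.1 % 3 = 2)
  rw [card_mod3] at h1
  simp only [Finset.card_univ, Fintype.card_fin] at h1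
  omega

lemma good_forcing : (wheelGraph (m+4)).IsLeakyForcingSet 2 ↑(goodSet m) := by
  intro L hL v
  set G := wheelGraph (m+4)
  have hhub : G.LeakyForces ↑L ↑(goodSet m) none := .init _ mem_goodSet_none
  have hinit : ∀ i : Fin (m+4), ¬ i.1 % 3 = 2 → G.LeakyForces ↑L ↑(goodSet m) (some i) :=
    fun i h => .init _ (mem_goodSet_some h)
  have hstep : ∀ d : Fin (m+4), d.1 % 3 = 2 →
      (some (d-1) ∉ (↑L : Set (Option (Fin (m+4)))) ∨ some (d+1) ∉ (↑L : Set (Option (Fin (m+4))))) →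
      G.LeakyForces ↑L ↑(goodSet m) (some d) := by
    intro d hd h
    have hd2 : 2 ≤ d.1 := by omega
    rcases h with h | h
    · have e1 : ((d-1 : Fin (m+4)) : ℕ) = d.1 - 1 := by
        rcases vsub1 d with ⟨h1, _⟩ | ⟨_, h2⟩ <;> omega
      have h1 : G.LeakyForces ↑L ↑(goodSet m) (some (d-1)) := hinit _ (by omega)
      have h3 : G.LeakyForces ↑L ↑(goodSet m) (some ((d-1)-1)) := by
        apply hinit
        rcases vsub1 (d-1) with ⟨h1', _⟩ | ⟨_, h2'⟩ <;> omega
      have := force_up h h1 hhub h3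
      rwa [sub_add_cancel] at this
    · have e1 : ((d+1 : Fin (m+4)) : ℕ) = 0 ∨ ((d+1 : Fin (m+4)) : ℕ) = d.1 + 1 := by
        rcases vadd1 d with ⟨_, h1⟩ | ⟨_, h2⟩ <;> omega
      have h1 : G.LeakyForces ↑L ↑(goodSet m) (some (d+1)) := hinit _ (by omega)
      have h3 : G.LeakyForces ↑L ↑(goodSet m) (some ((d+1)+1)) := by
        apply hinit
        rcases vadd1 (d+1) with ⟨h1', h2'⟩ | ⟨h1', h2'⟩ <;> omega
      have := force_down h h1 hhub h3
      rwa [add_sub_cancel_right] at this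
  cases v with
  | none => exact hhub
  | some j =>
    by_cases hj : j.1 % 3 = 2
    swap
    · exact hinit _ hj
    by_cases hcase : some (j-1) ∉ (↑L : Set (Option (Fin (m+4)))) ∨ some (j+1) ∉ (↑L : Set (Option (Fin (m+4))))
    · exact hstep j hj hcase
    push_neg at hcase
    obtain ⟨hL1, hL2⟩ := hcase
    rw [Finset.mem_coe] at hL1 hL2
    have hne : (some (j-1) : Option (Fin (m+4))) ≠ some (j+1) := by
      simpa using fin_sub_one_ne_add_one j
    have hLeq : ({some (j-1), some (j+1)} : Finset (Option (Fin (m+4)))) = L := by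
      apply Finset.eq_of_subset_of_card_le
      · intro x hx
        rcases Finset.mem_insert.mp hx with rfl | hx
        · exact hL1
        · rw [Finset.mem_singleton] at hx; subst hx; exact hL2
      · calc L.card ≤ 2 := hL
          _ = ({some (j-1), some (j+1)} : Finset (Option (Fin (m+4)))).card := by
            rw [Finset.card_insert_of_notMem (by simpa using hne), Finset.card_singleton]
    have hnL : none ∉ (↑L : Set (Option (Fin (m+4)))) := by
      rw [← hLeq]; simp
    apply force_hub hnL hhub
    intro i hij
    by_cases hi : i.1 % 3 = 2
    swap
    · exact hinit _ hi
    apply hstep i hi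
    by_contra hc
    push_neg at hc
    obtain ⟨hc1, hc2⟩ := hc
    rw [Finset.mem_coe, ← hLeq] at hc1 hc2
    simp only [Finset.mem_insert, Finset.mem_singleton, Option.some_inj] at hc1 hc2
    -- derive contradiction
    have hi2 : 2 ≤ i.1 := by omega
    have hj2 : 2 ≤ j.1 := by omega
    rcases hc1 with h1 | h1
    · -- i - 1 = j - 1 → i = j
      apply hij
      have := congrArg (· + 1) h1
      simpa [sub_add_cancel] using this
    · rcases hc2 with h2 | h2
      · -- i - 1 = j + 1, i + 1 = j - 1
        rw [fin_eq_iff] at h1 h2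
        rcases vsub1 i with ⟨e1, e2⟩ | ⟨e1, e2⟩ <;>
        rcases vadd1 j with ⟨e3, e4⟩ | ⟨e3, e4⟩ <;>
        rcases vadd1 i with ⟨e5, e6⟩ | ⟨e5, e6⟩ <;>
        rcases vsub1 j with ⟨e7, e8⟩ | ⟨e7, e8⟩ <;> omega
      · -- i + 1 = j + 1 → i = j
        apply hij
        have := congrArg (· - 1) h2
        simpa [add_sub_cancel_right] using this

end Upper
section Lower
variable {m : ℕ}

lemma fin_ne_add_two (i : Fin (m+4)) : i ≠ i + 1 + 1 := by
  intro h
  rw [fin_eq_iff] at h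
  rcases vadd1 i with ⟨e1, e2⟩ | ⟨e1, e2⟩ <;> rcases vadd1 (i+1) with ⟨e3, e4⟩ | ⟨e3, e4⟩ <;> omega

lemma pair_fort (S : Finset (Option (Fin (m+4))))
    (hforce : (wheelGraph (m+4)).IsLeakyForcingSet 2 ↑S)
    (z t : Fin (m+4)) (hz : some z ∉ S) (ht : some t ∉ S)
    (hcase : t = z + 1 ∨ t = z + 1 + 1) : False := by
  classical
  have htz : t ≠ z := by
    rcases hcase with rfl | rfl
    · exact (fin_ne_add_one z).symm
    · exact (fin_ne_add_two z).symm
  set L : Finset (Option (Fin (m+4))) := {some (z-1), some (t+1)} with hLdef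
  have hLcard : L.card ≤ 2 := le_trans (Finset.card_insert_le _ _) (by simp)
  have hforced := hforce L hLcard (some z)
  set F : Set (Option (Fin (m+4))) := {some z, some t} with hFdef
  refine fort_lemma (wheelGraph (m+4)) ↑L ↑S F ?_ ?_ (some z) hforced (Or.inl rfl)
  · intro v hv hvS
    rcases hv with rfl | rfl
    · exact hz (Finset.mem_coe.mp hvS)
    · exact ht (Finset.mem_coe.mp hvS)
  · intro u v huF huL hvF hadj
    cases u with
    | none =>
      rcases hvF with rfl | rfl
      · exact ⟨some t, Or.inr rfl, by simpa using htz, wheel_adj_none_some⟩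
      · exact ⟨some z, Or.inl rfl, by simpa using htz.symm, wheel_adj_none_some⟩
    | some a =>
      rcases hvF with rfl | rfl
      · -- v = some z
        rcases wheel_adj_some_some.mp hadj with ha | ha
        · -- a = z + 1
          rcases hcase with rfl | hc
          · exact absurd (Or.inr (by rw [ha]; rfl)) huF
          · refine ⟨some t, Or.inr rfl, by simpa using htz, ?_⟩
            apply wheel_adj_some_some.mpr
            right
            rw [hc, ha]
        · -- z = a + 1, so a = z - 1 ∈ L
          exfalso
          apply huL
          have : a = z - 1 := by rw [ha, add_sub_cancel_right]
          rw [this]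
          simp [hLdef]
      · -- v = some t
        rcases wheel_adj_some_some.mp hadj with ha | ha
        · -- a = t + 1 ∈ L
          exfalso
          apply huL
          rw [ha]
          simp [hLdef]
        · -- t = a + 1, a = t - 1
          have ha' : a = t - 1 := by rw [ha, add_sub_cancel_right]
          rcases hcase with rfl | hc
          · -- t = z+1, a = z
            exfalso
            apply huF
            left
            rw [ha', add_sub_cancel_right]
          · -- t = z+1+1, a = z+1
            refine ⟨some z, Or.inl rfl, by simpa using htz.symm, ?_⟩
            apply wheel_adj_some_some.mpr
            left
            rw [ha', hc, add_sub_cancel_right]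

lemma triple_card (z : Fin (m+4)) : ({z-1, z, z+1} : Finset (Fin (m+4))).card = 3 := by
  rw [Finset.card_insert_of_notMem, Finset.card_insert_of_notMem, Finset.card_singleton]
  · rw [Finset.mem_singleton]
    exact fin_ne_add_one z
  · simp only [Finset.mem_insert, Finset.mem_singleton]
    push_neg
    exact ⟨(fin_ne_sub_one z).symm, fin_sub_one_ne_add_one z⟩

lemma disj_balls (S : Finset (Option (Fin (m+4))))
    (hforce : (wheelGraph (m+4)).IsLeakyForcingSet 2 ↑S)
    {z t : Fin (m+4)} (hz : some z ∉ S) (ht : some t ∉ S) (hzt : z ≠ t) :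
    Disjoint ({z-1, z, z+1} : Finset (Fin (m+4))) {t-1, t, t+1} := by
  rw [Finset.disjoint_left]
  intro x hx hx'
  simp only [Finset.mem_insert, Finset.mem_singleton] at hx hx'
  have cancel1 : ∀ a b : Fin (m+4), a - 1 = b - 1 → a = b := by
    intro a b h
    have := congrArg (· + 1) h
    simpa [sub_add_cancel] using this
  rcases hx with h1 | h1 | h1 <;> rcases hx' with h2 | h2 | h2
  · exact hzt (cancel1 _ _ (h1.symm.trans h2))
  · exact pair_fort S hforce t z ht hz (Or.inl (sub_eq_iff_eq_add.mp (h1.symm.trans h2)))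
  · exact pair_fort S hforce t z ht hz (Or.inr (sub_eq_iff_eq_add.mp (h1.symm.trans h2)))
  · exact pair_fort S hforce z t hz ht (Or.inl (sub_eq_iff_eq_add.mp (h2.symm.trans h1)))
  · exact hzt (h1.symm.trans h2)
  · exact pair_fort S hforce t z ht hz (Or.inl (h1.symm.trans h2))
  · exact pair_fort S hforce z t hz ht (Or.inr (sub_eq_iff_eq_add.mp (h2.symm.trans h1)))
  · exact pair_fort S hforce z t hz ht (Or.inl (h2.symm.trans h1))
  · exact hzt (add_right_cancel (h1.symm.trans h2))

lemma lower_bound (S : Finset (Option (Fin (m+4))))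
    (hforce : (wheelGraph (m+4)).IsLeakyForcingSet 2 ↑S) :
    (2*(m+4)+2)/3 + 1 ≤ S.card := by
  classical
  set U : Finset (Fin (m+4)) := Finset.univ.filter (fun i => some i ∉ S) with hU
  have hUmem : ∀ i, i ∈ U ↔ some i ∉ S := by intro i; simp [hU]
  have hB : (U.biUnion (fun z => ({z-1, z, z+1} : Finset (Fin (m+4))))).card = 3 * U.card := by
    rw [Finset.card_biUnion]
    · rw [Finset.sum_congr rfl (fun z _ => triple_card z), Finset.sum_const, smul_eq_mul, mul_comm]
    · intro z hz t ht hzt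
      exact disj_balls S hforce ((hUmem z).mp hz) ((hUmem t).mp ht) hzt
  have h3U : 3 * U.card ≤ m + 4 := by
    calc 3 * U.card = _ := hB.symm
    _ ≤ (Finset.univ : Finset (Fin (m+4))).card := Finset.card_le_card (Finset.subset_univ _)
    _ = m + 4 := by simp
  have hrim : ((Finset.univ \ U).image some) ⊆ S := by
    intro x hx
    obtain ⟨i, hi, rfl⟩ := Finset.mem_image.mp hx
    rw [Finset.mem_sdiff] at hi
    have h2 := hi.2
    rw [hUmem] at h2
    exact not_not.mp h2
  have hrimcard : ((Finset.univ \ U).image some).card = m + 4 - U.card := by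
    rw [Finset.card_image_of_injective _ (Option.some_injective _),
      Finset.card_sdiff_of_subset (Finset.subset_univ _)]
    simp
  by_cases hhub : none ∈ S
  · have hsub : insert none ((Finset.univ \ U).image some) ⊆ S :=
      Finset.insert_subset hhub hrim
    have hcard := Finset.card_le_card hsub
    rw [Finset.card_insert_of_notMem (by simp), hrimcard] at hcard
    omega
  · by_contra hlt
    push_neg at hlt
    have hScard : S.card ≤ (2*(m+4)+2)/3 := by omega
    have h1 : m + 4 - U.card ≤ S.card := hrimcard ▸ Finset.card_le_card hrim
    set B := U.biUnion (fun z => ({z-1, z, z+1} : Finset (Fin (m+4)))) with hBdef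
    set W := (Finset.univ : Finset (Fin (m+4))) \ B with hWdef
    have hWcard : W.card ≤ 2 := by
      rw [hWdef, Finset.card_sdiff_of_subset (Finset.subset_univ _)]
      rw [hB]
      simp only [Finset.card_univ, Fintype.card_fin]
      omega
    set L := W.image some with hLdef
    have hLcard : L.card ≤ 2 := le_trans Finset.card_image_le hWcard
    have hforced := hforce L hLcard none
    set F : Set (Option (Fin (m+4))) := {v | v = none ∨ ∃ i ∈ U, v = some i} with hFdef
    refine fort_lemma (wheelGraph (m+4)) ↑L ↑S F ?_ ?_ none hforced (Or.inl rfl)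
    · rintro v hv hvS
      rcases hv with rfl | ⟨i, hi, rfl⟩
      · exact hhub (Finset.mem_coe.mp hvS)
      · exact (hUmem i).mp hi (Finset.mem_coe.mp hvS)
    · intro u v huF huL hvF hadj
      cases u with
      | none => exact absurd (Or.inl rfl) huF
      | some a =>
        rcases hvF with rfl | ⟨i, hi, rfl⟩
        · have haU : a ∉ U := fun h => huF (Or.inr ⟨a, h, rfl⟩)
          have haW : a ∉ W := by
            intro h
            exact huL (Finset.mem_coe.mpr (Finset.mem_image_of_mem some h))
          have haB : a ∈ B := by
            by_contra hc
            exact haW (Finset.mem_sdiff.mpr ⟨Finset.mem_univ _, hc⟩)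
          obtain ⟨zz, hzU, hz3⟩ := Finset.mem_biUnion.mp haB
          simp only [Finset.mem_insert, Finset.mem_singleton] at hz3
          refine ⟨some zz, Or.inr ⟨zz, hzU, rfl⟩, by simp, ?_⟩
          rcases hz3 with rfl | rfl | rfl
          · exact wheel_adj_some_some.mpr (Or.inr (sub_add_cancel zz 1).symm)
          · exact absurd hzU haU
          · exact wheel_adj_some_some.mpr (Or.inl rfl)
        · exact ⟨none, Or.inl rfl, by simp, wheel_adj_some_none⟩

end Lower


theorem wheel_two_forcing_number (n : ℕ) (hn : 4 ≤ n) :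
    (wheelGraph n).leakyForcingNumber 2 = (2 * n + 2) / 3 + 1 := by
  obtain ⟨m, rfl⟩ : ∃ m, n = m + 4 := ⟨n - 4, by omega⟩
  rw [SimpleGraph.leakyForcingNumber]
  apply le_antisymm
  · exact Nat.sInf_le ⟨goodSet m, goodSet_card, good_forcing⟩
  · have hne : {k | ∃ S : Finset (Option (Fin (m+4))), S.card = k ∧
        (wheelGraph (m+4)).IsLeakyForcingSet 2 ↑S}.Nonempty :=
      ⟨(goodSet m).card, goodSet m, rfl, good_forcing⟩
    apply le_csInf hne
    rintro k ⟨S, rfl, hf⟩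
    exact lower_bound S hf
end

section
/- For finite simple graphs G and H and any ℓ ≥ 0, the ℓ-forcing number of the Cartesian product satisfies Z_{(ℓ)}(G □ H) ≤ min(|V(G)| · Z_{(ℓ)}(H), |V(H)| · Z_{(ℓ)}(G)). -/
open SimpleGraph

section Aux
variable {V W : Type*} (G : SimpleGraph V) (H : SimpleGraph W)

lemma rowForces {L : Set (V × W)} {S : Set W} {L' : Set W}
    (hL : ∀ p : V × W, p ∈ L → p.2 ∈ L') {y : W}
    (hy : H.LeakyForces L' S y) :
    ∀ x : V, (G □ H).LeakyForces L (Set.univ ×ˢ S) (x, y) := by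
  induction hy with
  | init v hv => exact fun x => .init _ ⟨trivial, hv⟩
  | force u v hu hcu huv hall ihcu ihall =>
    intro x
    refine .force (x, u) (x, v) (fun h => hu (hL _ h)) (ihcu x)
      (SimpleGraph.boxProd_adj.2 (Or.inr ⟨huv, rfl⟩)) ?_
    rintro ⟨a, b⟩ hadj hne
    rcases SimpleGraph.boxProd_adj.1 hadj with ⟨h1, h2⟩ | ⟨h1, h2⟩
    · simp only at h1 h2; subst h2; exact ihcu a
    · simp only at h1 h2; subst h2
      exact ihall b h1 (fun h => hne (by rw [h])) x

lemma colForces {L : Set (V × W)} {S : Set V} {L' : Set V}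
    (hL : ∀ p : V × W, p ∈ L → p.1 ∈ L') {x : V}
    (hx : G.LeakyForces L' S x) :
    ∀ y : W, (G □ H).LeakyForces L (S ×ˢ Set.univ) (x, y) := by
  induction hx with
  | init v hv => exact fun y => .init _ ⟨hv, trivial⟩
  | force u v hu hcu huv hall ihcu ihall =>
    intro y
    refine .force (u, y) (v, y) (fun h => hu (hL _ h)) (ihcu y)
      (SimpleGraph.boxProd_adj.2 (Or.inl ⟨huv, rfl⟩)) ?_
    rintro ⟨a, b⟩ hadj hne
    rcases SimpleGraph.boxProd_adj.1 hadj with ⟨h1, h2⟩ | ⟨h1, h2⟩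
    · simp only at h1 h2; subst h2
      exact ihall a h1 (fun h => hne (by rw [h])) y
    · simp only at h1 h2; subst h2; exact ihcu b

end Aux

lemma exists_min_forcing {α : Type*} [Fintype α] (K : SimpleGraph α) (ℓ : ℕ) :
    ∃ S : Finset α, S.card = K.leakyForcingNumber ℓ ∧ K.IsLeakyForcingSet ℓ ↑S := by
  have hmem : K.leakyForcingNumber ℓ ∈
      {k | ∃ S : Finset α, S.card = k ∧ K.IsLeakyForcingSet ℓ ↑S} := by
    apply Nat.sInf_mem
    exact ⟨Finset.univ.card, Finset.univ, rfl, fun L hL v => .init v (by simp)⟩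
  obtain ⟨S, hS1, hS2⟩ := hmem
  exact ⟨S, hS1, hS2⟩

theorem boxProd_leaky_forcing_le {V W : Type*} [Fintype V] [Fintype W]
    (G : SimpleGraph V) (H : SimpleGraph W) (ℓ : ℕ) :
    (G □ H).leakyForcingNumber ℓ ≤
      min (Fintype.card V * H.leakyForcingNumber ℓ)
        (Fintype.card W * G.leakyForcingNumber ℓ) := by
  classical
  obtain ⟨SH, hSHcard, hSH⟩ := exists_min_forcing H ℓ
  obtain ⟨SG, hSGcard, hSG⟩ := exists_min_forcing G ℓ
  apply le_min
  · apply Nat.sInf_le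
    refine ⟨Finset.univ ×ˢ SH, by simp [hSHcard], ?_⟩
    intro L hL v
    have h := hSH (L.image Prod.snd) (le_trans Finset.card_image_le hL) v.2
    have := rowForces G H (L := ↑L) (L' := ↑(L.image Prod.snd))
      (fun p hp => by exact_mod_cast Finset.mem_image_of_mem Prod.snd hp) h v.1
    simpa using this
  · apply Nat.sInf_le
    refine ⟨SG ×ˢ Finset.univ, by simp [hSGcard, mul_comm], ?_⟩
    intro L hL v
    have h := hSG (L.image Prod.fst) (le_trans Finset.card_image_le hL) v.1
    have := colForces G H (L := ↑L) (L' := ↑(L.image Prod.fst))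
      (fun p hp => by exact_mod_cast Finset.mem_image_of_mem Prod.fst hp) h v.2
    simpa using this
end

section
/- If S is an ℓ-forcing set of a graph G, then S × V(H) is an ℓ-forcing set of the Cartesian product G □ H. -/
open SimpleGraph

theorem boxProd_leaky_forcing_set {V W : Type*} [Fintype V] [Fintype W]
    (G : SimpleGraph V) (H : SimpleGraph W) (ℓ : ℕ) (S : Set V)
    (hS : G.IsLeakyForcingSet ℓ S) :
    (G □ H).IsLeakyForcingSet ℓ (S ×ˢ (Set.univ : Set W)) := by
  classical
  intro L hL p
  obtain ⟨v, w⟩ := p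
  have h := hS (L.image Prod.fst) (le_trans Finset.card_image_le hL) v
  revert w
  induction h with
  | init v hv => exact fun w => .init _ ⟨hv, trivial⟩
  | force u v hu hcu huv hall ih1 ih2 =>
    intro w
    refine .force (u, w) (v, w) ?_ (ih1 w) (Or.inl ⟨huv, rfl⟩) ?_
    · intro hmem
      exact hu (Finset.mem_coe.mpr (Finset.mem_image_of_mem Prod.fst (Finset.mem_coe.mp hmem)))
    · rintro ⟨x, y⟩ hadj hne
      rcases hadj with ⟨hGux, hwy⟩ | ⟨hHwy, hux⟩
      · cases hwy
        exact ih2 x hGux (fun hxv => hne (by rw [hxv])) w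
      · cases hux
        exact ih1 y
end

section
/- For the hypercube Q_d with d ≥ 2, the 1-forcing number equals 2^{d−1}. -/
open SimpleGraph

/-- The `d`-dimensional hypercube: vertices are binary strings of length `d`, adjacent
iff they differ in exactly one coordinate. -/
def hypercubeGraph (d : ℕ) : SimpleGraph (Fin d → Bool) where
  Adj x y := (Finset.univ.filter fun i => x i ≠ y i).card = 1
  symm := by
    constructor
    intro x y h
    have he : (Finset.univ.filter fun i => y i ≠ x i)
        = (Finset.univ.filter fun i => x i ≠ y i) := by
      apply Finset.filter_congr
      intro i _
      simp [ne_comm]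
    rw [he]
    exact h
  loopless := by
    constructor
    intro x h
    simp at h

/-! ### Auxiliary definitions and lemmas -/

/-- Flip coordinate `i`. -/
def flipv {d : ℕ} (i : Fin d) (x : Fin d → Bool) : Fin d → Bool := Function.update x i (!x i)

/-- The half cube: vertices whose first coordinate is `false`. -/
def halfSet (n : ℕ) (hn : 2 ≤ n) : Finset (Fin n → Bool) :=
  Finset.univ.filter (fun x => x ⟨0, by omega⟩ = false)

variable {d : ℕ}

@[simp] lemma flipv_self (i : Fin d) (x : Fin d → Bool) : flipv i x i = !x i :=
  Function.update_self i _ x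

lemma flipv_ne_apply {i k : Fin d} (h : k ≠ i) (x : Fin d → Bool) : flipv i x k = x k :=
  Function.update_of_ne h _ x

@[simp] lemma flipv_flipv (i : Fin d) (x : Fin d → Bool) : flipv i (flipv i x) = x := by
  funext k
  by_cases h : k = i
  · subst h; simp
  · rw [flipv_ne_apply h, flipv_ne_apply h]

lemma flipv_ne (i : Fin d) (x : Fin d → Bool) : flipv i x ≠ x := by
  intro h
  have := congrFun h i
  simp at this

lemma flipv_comm {i j : Fin d} (h : i ≠ j) (x : Fin d → Bool) :
    flipv j (flipv i x) = flipv i (flipv j x) := by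
  funext k
  simp only [flipv, Function.update_apply]
  split_ifs with h1 h2 h2 <;> simp_all

lemma flipv_inj_ne {i j : Fin d} (x : Fin d → Bool) (h : i ≠ j) : flipv i x ≠ flipv j x := by
  intro he
  have := congrFun he i
  rw [flipv_self, flipv_ne_apply h] at this
  simp at this

lemma hyper_adj_iff {x y : Fin d → Bool} :
    (hypercubeGraph d).Adj x y ↔ ∃ i, y = flipv i x := by
  show (Finset.univ.filter fun i => x i ≠ y i).card = 1 ↔ _
  rw [Finset.card_eq_one]
  constructor
  · rintro ⟨i, hi⟩
    refine ⟨i, funext fun j => ?_⟩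
    by_cases hj : j = i
    · subst hj
      have : j ∈ Finset.univ.filter fun i => x i ≠ y i := by
        rw [hi]; exact Finset.mem_singleton_self j
      have hne : x j ≠ y j := by simpa using this
      revert hne; rw [flipv_self]; cases x j <;> cases y j <;> simp
    · have : j ∉ Finset.univ.filter fun i => x i ≠ y i := by rw [hi]; simpa using hj
      have hx : x j = y j := by simpa using this
      rw [flipv_ne_apply hj, hx]
  · rintro ⟨i, rfl⟩
    refine ⟨i, ?_⟩
    ext j
    simp only [Finset.mem_filter, Finset.mem_univ, true_and, Finset.mem_singleton]
    constructor
    · intro h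
      by_contra hj
      exact h (flipv_ne_apply hj x).symm
    · rintro rfl
      rw [flipv_self]
      cases x j <;> simp

/-! ### The sign function and gamma (Jordan–Wigner) matrices -/

noncomputable def sgn (x : Fin d → Bool) (i : Fin d) : ℝ :=
  ∏ k : Fin d, if i < k ∧ x k = true then (-1 : ℝ) else 1

lemma sgn_sq (x : Fin d → Bool) (i : Fin d) : sgn x i * sgn x i = 1 := by
  rw [sgn, ← Finset.prod_mul_distrib]
  apply Finset.prod_eq_one
  intro k _
  split_ifs <;> norm_num

lemma sgn_ne_zero (x : Fin d → Bool) (i : Fin d) : sgn x i ≠ 0 := by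
  intro h
  have := sgn_sq x i
  rw [h] at this
  norm_num at this

lemma sgn_flip_self (x : Fin d → Bool) (i : Fin d) : sgn (flipv i x) i = sgn x i := by
  apply Finset.prod_congr rfl
  intro k _
  by_cases hk : k = i
  · subst hk; simp
  · rw [flipv_ne_apply hk]

lemma sgn_flip_of_lt {i j : Fin d} (h : i < j) (x : Fin d → Bool) :
    sgn (flipv i x) j = sgn x j := by
  apply Finset.prod_congr rfl
  intro k _
  by_cases hk : k = i
  · subst hk
    have : ¬ j < k := fun hc => absurd (lt_trans h hc) (lt_irrefl _)
    simp [this]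
  · rw [flipv_ne_apply hk]

lemma sgn_flip_of_gt {i j : Fin d} (h : i < j) (x : Fin d → Bool) :
    sgn (flipv j x) i = - sgn x i := by
  rw [sgn, sgn, ← Finset.mul_prod_erase Finset.univ _ (Finset.mem_univ j),
    ← Finset.mul_prod_erase Finset.univ
      (fun k => if i < k ∧ x k = true then (-1:ℝ) else 1) (Finset.mem_univ j)]
  have he : ∏ k ∈ Finset.univ.erase j, (if i < k ∧ flipv j x k = true then (-1:ℝ) else 1)
      = ∏ k ∈ Finset.univ.erase j, (if i < k ∧ x k = true then (-1:ℝ) else 1) := by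
    apply Finset.prod_congr rfl
    intro k hk
    rw [flipv_ne_apply (Finset.ne_of_mem_erase hk)]
  rw [he, flipv_self]
  cases hxj : x j <;> simp [h]

noncomputable def gam (i : Fin d) : Matrix (Fin d → Bool) (Fin d → Bool) ℝ :=
  Matrix.of fun x y => if y = flipv i x then sgn x i else 0

lemma gam_mul (i j : Fin d) : gam i * gam j =
    Matrix.of fun x y => if y = flipv j (flipv i x) then sgn x i * sgn (flipv i x) j else 0 := by
  ext x y
  rw [Matrix.mul_apply]
  simp only [gam, Matrix.of_apply]
  rw [Finset.sum_eq_single (flipv i x)]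
  · simp only [if_pos rfl]
    split_ifs <;> ring
  · intro z _ hz
    rw [if_neg hz, zero_mul]
  · intro h
    exact absurd (Finset.mem_univ _) h

lemma gam_sq (i : Fin d) : gam i * gam i = 1 := by
  rw [gam_mul]
  ext x y
  rw [Matrix.of_apply, flipv_flipv, sgn_flip_self, sgn_sq, Matrix.one_apply]
  simp [eq_comm]

lemma gam_anticomm {i j : Fin d} (h : i ≠ j) : gam i * gam j = - (gam j * gam i) := by
  rw [gam_mul, gam_mul]
  ext x y
  simp only [Matrix.of_apply, Matrix.neg_apply, flipv_comm h]
  rcases lt_or_gt_of_ne h with hlt | hgt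
  · rw [sgn_flip_of_lt hlt, sgn_flip_of_gt hlt]
    split_ifs <;> ring
  · rw [sgn_flip_of_gt hgt, sgn_flip_of_lt hgt]
    split_ifs <;> ring

noncomputable def hypMat (d : ℕ) : Matrix (Fin d → Bool) (Fin d → Bool) ℝ := ∑ i, gam i

lemma hypMat_sq : hypMat d * hypMat d = (d : ℝ) • 1 := by
  rw [hypMat, Finset.sum_mul_sum]
  have hzero : ∑ p ∈ (Finset.univ : Finset (Fin d)).offDiag, gam p.1 * gam p.2 = 0 := by
    apply Finset.sum_involution (fun p _ => Prod.swap p)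
    · intro p hp
      have hne : p.1 ≠ p.2 := (Finset.mem_offDiag.mp hp).2.2
      simp only [Prod.fst_swap, Prod.snd_swap]
      rw [gam_anticomm hne]
      exact neg_add_cancel _
    · intro p hp _
      have hne : p.1 ≠ p.2 := (Finset.mem_offDiag.mp hp).2.2
      intro hc
      exact hne (congrArg Prod.snd hc)
    · intro p hp
      have h := Finset.mem_offDiag.mp hp
      exact Finset.mem_offDiag.mpr ⟨h.2.1, h.1, h.2.2.symm⟩
    · intro p hp
      rfl
  have hsplit : ∑ p ∈ (Finset.univ : Finset (Fin d)).offDiag, gam p.1 * gam p.2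
      = ∑ i : Fin d, ∑ j ∈ Finset.univ.erase i, gam i * gam j := by
    refine Finset.sum_finset_product' _ _ _ (f := fun i j => gam i * gam j) ?_
    intro p
    simp only [Finset.mem_offDiag, Finset.mem_univ, true_and, Finset.mem_erase]
    tauto
  have key : ∀ i : Fin d, ∑ j, gam i * gam j = 1 + ∑ j ∈ Finset.univ.erase i, gam i * gam j := by
    intro i
    rw [← Finset.add_sum_erase Finset.univ _ (Finset.mem_univ i), gam_sq]
  calc ∑ i : Fin d, ∑ j : Fin d, gam i * gam j
      = ∑ i : Fin d, (1 + ∑ j ∈ Finset.univ.erase i, gam i * gam j) :=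
        Finset.sum_congr rfl fun i _ => key i
    _ = (d : ℝ) • 1 + ∑ i : Fin d, ∑ j ∈ Finset.univ.erase i, gam i * gam j := by
        rw [Finset.sum_add_distrib, Finset.sum_const, Finset.card_univ, Fintype.card_fin,
          Nat.cast_smul_eq_nsmul]
    _ = (d : ℝ) • 1 := by rw [← hsplit, hzero, add_zero]

lemma hypMat_offdiag {x y : Fin d → Bool} (hna : ¬ (hypercubeGraph d).Adj x y) :
    hypMat d x y = 0 := by
  rw [hypMat, Matrix.sum_apply]
  apply Finset.sum_eq_zero
  intro i _
  rw [gam, Matrix.of_apply, if_neg]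
  intro hy
  exact hna (hyper_adj_iff.mpr ⟨i, hy⟩)

lemma hypMat_adj {x y : Fin d → Bool} (ha : (hypercubeGraph d).Adj x y) : hypMat d x y ≠ 0 := by
  obtain ⟨i, rfl⟩ := hyper_adj_iff.mp ha
  rw [hypMat, Matrix.sum_apply]
  have : ∑ j : Fin d, gam j x (flipv i x) = sgn x i := by
    rw [Finset.sum_eq_single i]
    · rw [gam, Matrix.of_apply, if_pos rfl]
    · intro j _ hj
      rw [gam, Matrix.of_apply, if_neg (flipv_inj_ne x (Ne.symm hj))]
    · intro h; exact absurd (Finset.mem_univ i) h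
  rw [this]
  exact sgn_ne_zero x i

/-! ### A kernel vector of a matrix supported on the graph vanishes if it vanishes on a
forcing set -/

lemma forces_vanish {V : Type*} [Fintype V] [DecidableEq V] (G : SimpleGraph V) (L S : Set V)
    (B : Matrix V V ℝ) (hB0 : ∀ x y, x ≠ y → ¬ G.Adj x y → B x y = 0)
    (hB1 : ∀ x y, G.Adj x y → B x y ≠ 0)
    (f : V → ℝ) (hf : B.mulVec f = 0) (hS : ∀ s ∈ S, f s = 0)
    {v : V} (h : G.LeakyForces L S v) : f v = 0 := by
  induction h with
  | init v hv => exact hS v hv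
  | force u v hu hcu huv hall ihu ihall =>
    have h0 : B.mulVec f u = 0 := congrFun hf u
    rw [Matrix.mulVec, dotProduct] at h0
    have hsum : ∑ w, B u w * f w = B u v * f v := by
      apply Finset.sum_eq_single
      · intro w _ hw
        by_cases hwu : w = u
        · subst hwu; rw [ihu, mul_zero]
        · by_cases hadj : G.Adj u w
          · rw [ihall w hadj hw, mul_zero]
          · rw [hB0 u w (Ne.symm hwu) hadj, zero_mul]
      · intro h; exact absurd (Finset.mem_univ v) h
    rw [hsum] at h0
    exact (mul_eq_zero.mp h0).resolve_left (hB1 u v huv)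

/-! ### The lower bound -/

lemma hyp_lower_bound (hd : 2 ≤ d) (S : Finset (Fin d → Bool))
    (hforce : ∀ v, (hypercubeGraph d).LeakyForces (↑(∅ : Finset (Fin d → Bool))) (↑S) v) :
    2 ^ (d - 1) ≤ S.card := by
  classical
  have hd0 : (0:ℝ) < d := by positivity
  set r : ℝ := Real.sqrt d with hr
  have hr2 : r * r = d := Real.mul_self_sqrt (le_of_lt hd0)
  have hrpos : 0 < r := Real.sqrt_pos.mpr hd0
  set Ap : Matrix (Fin d → Bool) (Fin d → Bool) ℝ := hypMat d + r • 1 with hAp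
  set Am : Matrix (Fin d → Bool) (Fin d → Bool) ℝ := hypMat d - r • 1 with hAm
  have hApm : Ap * Am = 0 := by
    rw [hAp, hAm]
    simp only [Matrix.add_mul, Matrix.mul_sub, Matrix.smul_mul, Matrix.mul_smul,
      Matrix.one_mul, Matrix.mul_one, smul_add, smul_sub, hypMat_sq, smul_smul, hr2]
    abel
  have hAmp : Am * Ap = 0 := by
    rw [hAp, hAm]
    simp only [Matrix.sub_mul, Matrix.mul_add, Matrix.smul_mul, Matrix.mul_smul,
      Matrix.one_mul, Matrix.mul_one, smul_add, smul_sub, hypMat_sq, smul_smul, hr2]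
    abel
  have hpat0 : ∀ (B : Matrix (Fin d → Bool) (Fin d → Bool) ℝ),
      (∀ x y, x ≠ y → B x y = hypMat d x y) →
      (∀ x y, x ≠ y → ¬ (hypercubeGraph d).Adj x y → B x y = 0) ∧
      (∀ x y, (hypercubeGraph d).Adj x y → B x y ≠ 0) := by
    intro B hB
    constructor
    · intro x y hxy hna; rw [hB x y hxy]; exact hypMat_offdiag hna
    · intro x y ha
      have hxy : x ≠ y := (hypercubeGraph d).ne_of_adj ha
      rw [hB x y hxy]; exact hypMat_adj ha
  have hApd : ∀ x y : Fin d → Bool, x ≠ y → Ap x y = hypMat d x y := by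
    intro x y hxy
    simp [hAp, Matrix.add_apply, Matrix.smul_apply, Matrix.one_apply_ne hxy]
  have hAmd : ∀ x y : Fin d → Bool, x ≠ y → Am x y = hypMat d x y := by
    intro x y hxy
    simp [hAm, Matrix.sub_apply, Matrix.smul_apply, Matrix.one_apply_ne hxy]
  obtain ⟨hAp0, hAp1⟩ := hpat0 Ap hApd
  obtain ⟨hAm0, hAm1⟩ := hpat0 Am hAmd
  let res : ((Fin d → Bool) → ℝ) →ₗ[ℝ] (↥(S : Set (Fin d → Bool)) → ℝ) :=
    LinearMap.funLeft ℝ ℝ (fun s => (s : Fin d → Bool))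
  let Φ : ((Fin d → Bool) → ℝ) →ₗ[ℝ]
      ((↥(S : Set (Fin d → Bool)) → ℝ) × (↥(S : Set (Fin d → Bool)) → ℝ)) :=
    (res.comp Ap.mulVecLin).prod (res.comp Am.mulVecLin)
  have hinj : Function.Injective Φ := by
    rw [← LinearMap.ker_eq_bot, LinearMap.ker_eq_bot']
    intro u hu
    have h1 : ∀ s ∈ (S : Set (Fin d → Bool)), Ap.mulVec u s = 0 := by
      intro s hs
      exact congrFun (congrArg Prod.fst hu) ⟨s, hs⟩
    have h2 : ∀ s ∈ (S : Set (Fin d → Bool)), Am.mulVec u s = 0 := by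
      intro s hs
      exact congrFun (congrArg Prod.snd hu) ⟨s, hs⟩
    have hker1 : Am.mulVec (Ap.mulVec u) = 0 := by
      rw [Matrix.mulVec_mulVec, hAmp, Matrix.zero_mulVec]
    have hker2 : Ap.mulVec (Am.mulVec u) = 0 := by
      rw [Matrix.mulVec_mulVec, hApm, Matrix.zero_mulVec]
    have hz1 : Ap.mulVec u = 0 := by
      funext v
      exact forces_vanish (hypercubeGraph d) _ _ Am hAm0 hAm1 _ hker1 h1 (hforce v)
    have hz2 : Am.mulVec u = 0 := by
      funext v
      exact forces_vanish (hypercubeGraph d) _ _ Ap hAp0 hAp1 _ hker2 h2 (hforce v)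
    have hsub : (Ap - Am).mulVec u = 0 := by
      rw [Matrix.sub_mulVec, hz1, hz2, sub_zero]
    have hApAm : Ap - Am = (2 * r) • 1 := by
      rw [hAp, hAm, two_mul, add_smul]
      abel
    rw [hApAm, Matrix.smul_mulVec, Matrix.one_mulVec, smul_eq_zero] at hsub
    rcases hsub with h | h
    · exact absurd h (by positivity)
    · exact h
  have hle := LinearMap.finrank_le_finrank_of_injective hinj
  rw [Module.finrank_prod] at hle
  have h1 : Module.finrank ℝ ((Fin d → Bool) → ℝ) = 2 ^ d := by
    rw [Module.finrank_pi ℝ]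
    simp
  have h2 : Module.finrank ℝ (↥(S : Set (Fin d → Bool)) → ℝ) = S.card := by
    rw [Module.finrank_pi ℝ]
    simp
  rw [h1, h2] at hle
  have : 2 ^ d = 2 ^ (d - 1) * 2 := by
    rw [← pow_succ]
    congr 1
    omega
  omega

/-! ### The upper bound: the half cube is a 1-forcing set -/

lemma halfSet_card (hd : 2 ≤ d) : (halfSet d hd).card = 2 ^ (d - 1) := by
  set p : (Fin d → Bool) → Prop := fun x => x ⟨0, by omega⟩ = false with hp
  have hsplit := Finset.card_filter_add_card_filter_not
    (s := (Finset.univ : Finset (Fin d → Bool))) (p := p)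
  have htot : (Finset.univ : Finset (Fin d → Bool)).card = 2 ^ d := by
    simp [Fintype.card_fun]
  have heq : (Finset.univ.filter p).card = (Finset.univ.filter (fun x => ¬ p x)).card := by
    apply Finset.card_bij (fun x _ => flipv ⟨0, by omega⟩ x)
    · intro a ha
      simp only [hp, Finset.mem_filter, Finset.mem_univ, true_and] at ha ⊢
      rw [flipv_self, ha]
      simp
    · intro a ha b hb hab
      have := congrArg (flipv ⟨0, by omega⟩) hab
      rwa [flipv_flipv, flipv_flipv] at this
    · intro b hb
      refine ⟨flipv ⟨0, by omega⟩ b, ?_, flipv_flipv _ b⟩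
      simp only [hp, Finset.mem_filter, Finset.mem_univ, true_and] at hb ⊢
      rw [flipv_self]
      simp only [Bool.not_eq_false] at hb
      rw [hb]
      rfl
  have h2 : 2 ^ d = 2 * 2 ^ (d - 1) := by
    have : d = (d-1) + 1 := by omega
    conv_lhs => rw [this]
    rw [pow_succ]
    ring
  have hhs : (halfSet d hd).card = (Finset.univ.filter p).card := rfl
  omega

lemma halfSet_forcing (hd : 2 ≤ d) : (hypercubeGraph d).IsLeakyForcingSet 1 ↑(halfSet d hd) := by
  intro L hL y
  set i0 : Fin d := ⟨0, by omega⟩ with hi0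
  set i1 : Fin d := ⟨1, by omega⟩ with hi1
  have hne01 : i1 ≠ i0 := by simp [hi0, hi1, Fin.ext_iff]
  have hmemS : ∀ z : Fin d → Bool, z i0 = false →
      z ∈ (↑(halfSet d hd) : Set (Fin d → Bool)) := by
    intro z hz
    simp only [halfSet, Finset.coe_filter, Set.mem_setOf_eq, Finset.mem_univ, true_and]
    exact hz
  have step1 : ∀ x : Fin d → Bool, x i0 = false → x ∉ L →
      (hypercubeGraph d).LeakyForces (↑L) (↑(halfSet d hd)) (flipv i0 x) := by
    intro x hx hxL
    refine .force x _ hxL (.init x (hmemS x hx)) (hyper_adj_iff.mpr ⟨i0, rfl⟩) ?_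
    intro w hadj hwne
    obtain ⟨j, rfl⟩ := hyper_adj_iff.mp hadj
    have hj : j ≠ i0 := fun hji => hwne (by rw [hji])
    exact .init _ (hmemS _ (by rw [flipv_ne_apply (Ne.symm hj)]; exact hx))
  by_cases hy0 : y i0 = false
  · exact .init y (hmemS y hy0)
  · have hy1 : y i0 = true := by revert hy0; cases y i0 <;> simp
    set x : Fin d → Bool := flipv i0 y with hx
    have hxi0 : x i0 = false := by rw [hx, flipv_self, hy1]; rfl
    have hxy : flipv i0 x = y := by rw [hx, flipv_flipv]
    by_cases hxL : x ∈ L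
    · have hone : ∀ z ∈ L, z = x := by
        intro z hz
        exact Finset.card_le_one.mp hL z hz x hxL
      set w : Fin d → Bool := flipv i1 y with hw
      have hwi0 : w i0 = y i0 := flipv_ne_apply hne01.symm y
      have hwL : w ∉ L := by
        intro hwL
        have := hone w hwL
        rw [← this] at hxi0
        rw [hwi0, hy1] at hxi0
        simp at hxi0
      have hwforced : (hypercubeGraph d).LeakyForces (↑L) (↑(halfSet d hd)) w := by
        have hx'i0 : (flipv i0 w) i0 = false := by rw [flipv_self, hwi0, hy1]; rfl
        have hx'L : flipv i0 w ∉ L := by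
          intro hmem
          have heq := hone _ hmem
          rw [hx] at heq
          have := congrArg (flipv i0) heq
          rw [flipv_flipv, flipv_flipv] at this
          exact flipv_ne i1 y this
        have := step1 (flipv i0 w) hx'i0 hx'L
        rwa [flipv_flipv] at this
      refine .force w y hwL hwforced (hyper_adj_iff.mpr ⟨i1, by rw [hw, flipv_flipv]⟩) ?_
      intro z hadj hzy
      obtain ⟨j, rfl⟩ := hyper_adj_iff.mp hadj
      by_cases hj0 : j = i0
      · subst hj0
        refine .init _ (hmemS _ ?_)
        rw [flipv_self, hwi0, hy1]
        rfl
      · have hzi0 : flipv j w i0 = true := by rw [flipv_ne_apply (Ne.symm hj0), hwi0, hy1]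
        have hz'i0 : (flipv i0 (flipv j w)) i0 = false := by rw [flipv_self, hzi0]; rfl
        have hz'L : flipv i0 (flipv j w) ∉ L := by
          intro hmem
          have heq := hone _ hmem
          rw [hx] at heq
          have := congrArg (flipv i0) heq
          rw [flipv_flipv, flipv_flipv] at this
          exact hzy this
        have := step1 _ hz'i0 hz'L
        rwa [flipv_flipv] at this
    · have := step1 x hxi0 hxL
      rwa [hxy] at this

theorem hypercube_one_forcing (d : ℕ) (hd : 2 ≤ d) :
    (hypercubeGraph d).leakyForcingNumber 1 = 2 ^ (d - 1) := by
  have hmem : 2 ^ (d - 1) ∈ {k | ∃ S : Finset (Fin d → Bool),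
      S.card = k ∧ (hypercubeGraph d).IsLeakyForcingSet 1 ↑S} :=
    ⟨halfSet d hd, halfSet_card hd, halfSet_forcing hd⟩
  apply le_antisymm
  · exact Nat.sInf_le hmem
  · apply le_csInf ⟨_, hmem⟩
    rintro k ⟨S, rfl, hS⟩
    exact hyp_lower_bound hd S (fun v => hS ∅ (by simp) v)
end

section
/- The 2-forcing number of the 3-dimensional hypercube Q_3 equals 6. In particular, the complement of any pair of vertices at distance 2 in Q_3 fails to be a 2-forcing set, so every pair of vertices at distance 2 is a 2-forcing fort. -/
set_option maxHeartbeats 4000000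
set_option maxRecDepth 100000


open SimpleGraph

namespace CubeAux

abbrev V3 := Fin 3 → Bool

instance : DecidableRel (hypercubeGraph 3).Adj := fun _ _ => Nat.decEq _ 1

/-- one forcing step -/
def step (L T : Finset V3) : Finset V3 :=
  T ∪ Finset.univ.filter (fun v => ∃ u ∈ T, u ∉ L ∧ (hypercubeGraph 3).Adj u v ∧
    ∀ w, (hypercubeGraph 3).Adj u w → w ≠ v → w ∈ T)

lemma soundness (L S : Finset V3) : ∀ n v, v ∈ (step L)^[n] S →
    (hypercubeGraph 3).LeakyForces ↑L ↑S v := by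
  intro n
  induction n with
  | zero => intro v hv; exact LeakyForces.init v (by simpa using hv)
  | succ n ih =>
    intro v hv
    rw [Function.iterate_succ_apply'] at hv
    rcases Finset.mem_union.1 hv with h | h
    · exact ih v h
    · obtain ⟨u, hu, huL, hadj, hall⟩ := Finset.mem_filter.1 h |>.2
      exact LeakyForces.force u v (by simpa using huL) (ih u hu) hadj
        (fun w hw hne => ih w (hall w hw hne))

lemma completeness (L C : Finset V3) (S : Set V3) (hfix : step L C = C) (hsub : ∀ x ∈ S, x ∈ C) :
    ∀ v, (hypercubeGraph 3).LeakyForces ↑L S v → v ∈ C := by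
  intro v h
  induction h with
  | init v hv => exact hsub v hv
  | force u v hu hcu huv hall ihu ihall =>
    rw [← hfix]
    refine Finset.mem_union.2 (Or.inr (Finset.mem_filter.2 ⟨Finset.mem_univ _, u, ihu, ?_, huv, ?_⟩))
    · simpa using hu
    · exact fun w hw hne => ihall w hw hne

lemma mono {V : Type*} (G : SimpleGraph V) (L S S' : Set V) (hss : S ⊆ S') :
    ∀ v, G.LeakyForces L S v → G.LeakyForces L S' v := by
  intro v h
  induction h with
  | init v hv => exact LeakyForces.init v (hss hv)
  | force u v hu hcu huv hall ihu ihall =>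
    exact LeakyForces.force u v hu ihu huv ihall

def S6 : Finset V3 := Finset.univ \ {(fun _ => false), (fun _ => true)}

lemma S6_card : S6.card = 6 := by decide

set_option maxRecDepth 20000 in
lemma S6_forcing : (hypercubeGraph 3).IsLeakyForcingSet 2 ↑S6 := by
  intro L hL v
  apply soundness L S6 8 v
  revert v hL
  revert L
  decide

def antip (u : V3) : V3 := fun i => !(u i)

set_option maxRecDepth 20000 in
lemma fort_key : ∀ u v : V3, (Finset.univ.filter fun i => u i ≠ v i).card = 2 →
    step {antip u, antip v} (Finset.univ \ {u, v}) = Finset.univ \ {u, v} ∧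
    u ∉ (Finset.univ \ {u, v} : Finset V3) := by decide

lemma fort : ∀ u v : V3, (Finset.univ.filter fun i => u i ≠ v i).card = 2 →
    ¬ (hypercubeGraph 3).IsLeakyForcingSet 2 ({u, v}ᶜ : Set V3) := by
  intro u v hd h
  obtain ⟨hfix, hnot⟩ := fort_key u v hd
  have hL : ({antip u, antip v} : Finset V3).card ≤ 2 :=
    le_trans (Finset.card_insert_le _ _) (by simp)
  have := h {antip u, antip v} hL u
  have hu : u ∈ (Finset.univ \ {u, v} : Finset V3) := by
    refine completeness _ _ _ hfix ?_ u this
    intro x hx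
    simp only [Set.mem_compl_iff, Set.mem_insert_iff, Set.mem_singleton_iff] at hx
    push_neg at hx
    simp [hx.1, hx.2]
  exact hnot hu



lemma pair_exists : ∀ T : Finset V3, 3 ≤ T.card →
    ∃ u ∈ T, ∃ v ∈ T, (Finset.univ.filter fun i => u i ≠ v i).card = 2 := by decide

lemma lower : ∀ S : Finset V3, (hypercubeGraph 3).IsLeakyForcingSet 2 ↑S → 6 ≤ S.card := by
  intro S hS
  by_contra hc
  push_neg at hc
  have hcard : 3 ≤ Sᶜ.card := by
    rw [Finset.card_compl]
    have : Fintype.card V3 = 8 := by decide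
    omega
  obtain ⟨u, hu, v, hv, hd⟩ := pair_exists Sᶜ hcard
  apply fort u v hd
  intro L hL w
  refine mono _ _ _ _ ?_ w (hS L hL w)
  intro x hx
  simp only [Finset.coe_compl, Finset.mem_coe, Finset.mem_compl] at hu hv
  simp only [Finset.mem_coe] at hx
  simp only [Set.mem_compl_iff, Set.mem_insert_iff, Set.mem_singleton_iff]
  rintro (rfl | rfl)
  · exact hu hx
  · exact hv hx

end CubeAux

theorem cube_two_forcing :
    (hypercubeGraph 3).leakyForcingNumber 2 = 6 ∧
    ∀ u v : Fin 3 → Bool, (Finset.univ.filter fun i => u i ≠ v i).card = 2 →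
      ¬ (hypercubeGraph 3).IsLeakyForcingSet 2 ({u, v}ᶜ : Set (Fin 3 → Bool)) := by
  constructor
  · apply le_antisymm
    · exact Nat.sInf_le ⟨CubeAux.S6, CubeAux.S6_card, CubeAux.S6_forcing⟩
    · refine le_csInf ⟨6, CubeAux.S6, CubeAux.S6_card, CubeAux.S6_forcing⟩ ?_
      rintro k ⟨S, rfl, hS⟩
      exact CubeAux.lower S hS
  · exact CubeAux.fort
end

section
/- For the grid graph P_n □ P_m, the set of all vertices lying on any two sides (two boundary rows/columns, whether opposite or consecutive) is a 1-forcing set. -/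
open SimpleGraph

section Aux

variable {n m : ℕ}

private abbrev GG (n m : ℕ) : SimpleGraph (Fin n × Fin m) :=
  SimpleGraph.pathGraph n □ SimpleGraph.pathGraph m

private lemma adj_iff {p q : Fin n × Fin m} :
    (GG n m).Adj p q ↔
      ((p.1.val + 1 = q.1.val ∨ q.1.val + 1 = p.1.val) ∧ p.2 = q.2) ∨
      ((p.2.val + 1 = q.2.val ∨ q.2.val + 1 = p.2.val) ∧ p.1 = q.1) := by
  simp [SimpleGraph.boxProd_adj, SimpleGraph.pathGraph_adj]

private lemma colStep (L S : Set (Fin n × Fin m)) (k : ℕ)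
    (h : ∀ p : Fin n × Fin m, p.2.val ≤ k → (GG n m).LeakyForces L S p)
    (hk : ∀ p : Fin n × Fin m, p.2.val = k → p ∈ L →
      ∀ q : Fin n × Fin m, q.1 = p.1 → q.2.val = k + 1 → (GG n m).LeakyForces L S q) :
    ∀ p : Fin n × Fin m, p.2.val ≤ k + 1 → (GG n m).LeakyForces L S p := by
  rintro ⟨i, j⟩ hp
  replace hp : j.val ≤ k + 1 := hp
  rcases Nat.lt_or_ge j.val (k + 1) with h1 | h1
  · exact h (i, j) (show j.val ≤ k by omega)
  have hpk : j.val = k + 1 := by omega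
  have hkm : k < m := by omega
  by_cases huL : ((i, ⟨k, hkm⟩) : Fin n × Fin m) ∈ L
  · exact hk _ rfl huL (i, j) rfl hpk
  · refine SimpleGraph.LeakyForces.force (i, ⟨k, hkm⟩) (i, j) huL
      (h _ (show k ≤ k from Nat.le_refl k)) ?_ ?_
    · rw [adj_iff]; right
      exact ⟨Or.inl (show k + 1 = j.val by omega), rfl⟩
    · rintro ⟨wi, wj⟩ hadj hne
      rw [adj_iff] at hadj
      rcases hadj with ⟨h2, h3⟩ | ⟨h3, h2⟩
      · have h3' : k = wj.val := congrArg Fin.val h3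
        exact h (wi, wj) (show wj.val ≤ k by omega)
      · have h3' : k + 1 = wj.val ∨ wj.val + 1 = k := h3
        have h2' : i = wi := h2
        rcases h3' with h3' | h3'
        · exfalso; apply hne
          exact Prod.ext h2'.symm (Fin.ext (show wj.val = j.val by omega))
        · exact h (wi, wj) (show wj.val ≤ k by omega)

private lemma colStep' (L S : Set (Fin n × Fin m)) (k : ℕ) (hkm : k + 1 < m)
    (h : ∀ p : Fin n × Fin m, k + 1 ≤ p.2.val → (GG n m).LeakyForces L S p)
    (hk : ∀ p : Fin n × Fin m, p.2.val = k + 1 → p ∈ L →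
      ∀ q : Fin n × Fin m, q.1 = p.1 → q.2.val = k → (GG n m).LeakyForces L S q) :
    ∀ p : Fin n × Fin m, k ≤ p.2.val → (GG n m).LeakyForces L S p := by
  rintro ⟨i, j⟩ hp
  replace hp : k ≤ j.val := hp
  rcases Nat.lt_or_ge k j.val with h1 | h1
  · exact h (i, j) (show k + 1 ≤ j.val by omega)
  have hpk : j.val = k := by omega
  by_cases huL : ((i, ⟨k + 1, hkm⟩) : Fin n × Fin m) ∈ L
  · exact hk _ rfl huL (i, j) rfl hpk
  · refine SimpleGraph.LeakyForces.force (i, ⟨k + 1, hkm⟩) (i, j) huL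
      (h _ (show k + 1 ≤ k + 1 from Nat.le_refl _)) ?_ ?_
    · rw [adj_iff]; right
      exact ⟨Or.inr (show j.val + 1 = k + 1 by omega), rfl⟩
    · rintro ⟨wi, wj⟩ hadj hne
      rw [adj_iff] at hadj
      rcases hadj with ⟨h2, h3⟩ | ⟨h3, h2⟩
      · have h3' : k + 1 = wj.val := congrArg Fin.val h3
        exact h (wi, wj) (show k + 1 ≤ wj.val by omega)
      · have h3' : k + 1 + 1 = wj.val ∨ wj.val + 1 = k + 1 := h3
        have h2' : i = wi := h2
        rcases h3' with h3' | h3'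
        · exact h (wi, wj) (show k + 1 ≤ wj.val by omega)
        · exfalso; apply hne
          exact Prod.ext h2'.symm (Fin.ext (show wj.val = j.val by omega))

private lemma rowStep (L S : Set (Fin n × Fin m)) (k : ℕ)
    (h : ∀ p : Fin n × Fin m, p.1.val ≤ k → (GG n m).LeakyForces L S p)
    (hk : ∀ p : Fin n × Fin m, p.1.val = k → p ∈ L →
      ∀ q : Fin n × Fin m, q.2 = p.2 → q.1.val = k + 1 → (GG n m).LeakyForces L S q) :
    ∀ p : Fin n × Fin m, p.1.val ≤ k + 1 → (GG n m).LeakyForces L S p := by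
  rintro ⟨i, j⟩ hp
  replace hp : i.val ≤ k + 1 := hp
  rcases Nat.lt_or_ge i.val (k + 1) with h1 | h1
  · exact h (i, j) (show i.val ≤ k by omega)
  have hpk : i.val = k + 1 := by omega
  have hkm : k < n := by omega
  by_cases huL : (((⟨k, hkm⟩ : Fin n), j) : Fin n × Fin m) ∈ L
  · exact hk _ rfl huL (i, j) rfl hpk
  · refine SimpleGraph.LeakyForces.force (⟨k, hkm⟩, j) (i, j) huL
      (h _ (show k ≤ k from Nat.le_refl k)) ?_ ?_
    · rw [adj_iff]; left
      exact ⟨Or.inl (show k + 1 = i.val by omega), rfl⟩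
    · rintro ⟨wi, wj⟩ hadj hne
      rw [adj_iff] at hadj
      rcases hadj with ⟨h3, h2⟩ | ⟨h2, h3⟩
      · have h3' : k + 1 = wi.val ∨ wi.val + 1 = k := h3
        have h2' : j = wj := h2
        rcases h3' with h3' | h3'
        · exfalso; apply hne
          exact Prod.ext (Fin.ext (show wi.val = i.val by omega)) h2'.symm
        · exact h (wi, wj) (show wi.val ≤ k by omega)
      · have h3' : k = wi.val := congrArg Fin.val h3
        exact h (wi, wj) (show wi.val ≤ k by omega)

private lemma rowStep' (L S : Set (Fin n × Fin m)) (k : ℕ) (hkm : k + 1 < n)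
    (h : ∀ p : Fin n × Fin m, k + 1 ≤ p.1.val → (GG n m).LeakyForces L S p)
    (hk : ∀ p : Fin n × Fin m, p.1.val = k + 1 → p ∈ L →
      ∀ q : Fin n × Fin m, q.2 = p.2 → q.1.val = k → (GG n m).LeakyForces L S q) :
    ∀ p : Fin n × Fin m, k ≤ p.1.val → (GG n m).LeakyForces L S p := by
  rintro ⟨i, j⟩ hp
  replace hp : k ≤ i.val := hp
  rcases Nat.lt_or_ge k i.val with h1 | h1
  · exact h (i, j) (show k + 1 ≤ i.val by omega)
  have hpk : i.val = k := by omega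
  by_cases huL : (((⟨k + 1, hkm⟩ : Fin n), j) : Fin n × Fin m) ∈ L
  · exact hk _ rfl huL (i, j) rfl hpk
  · refine SimpleGraph.LeakyForces.force (⟨k + 1, hkm⟩, j) (i, j) huL
      (h _ (show k + 1 ≤ k + 1 from Nat.le_refl _)) ?_ ?_
    · rw [adj_iff]; left
      exact ⟨Or.inr (show i.val + 1 = k + 1 by omega), rfl⟩
    · rintro ⟨wi, wj⟩ hadj hne
      rw [adj_iff] at hadj
      rcases hadj with ⟨h3, h2⟩ | ⟨h2, h3⟩
      · have h3' : k + 1 + 1 = wi.val ∨ wi.val + 1 = k + 1 := h3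
        have h2' : j = wj := h2
        rcases h3' with h3' | h3'
        · exact h (wi, wj) (show k + 1 ≤ wi.val by omega)
        · exfalso; apply hne
          exact Prod.ext (Fin.ext (show wi.val = i.val by omega)) h2'.symm
      · have h3' : k + 1 = wi.val := congrArg Fin.val h3
        exact h (wi, wj) (show k + 1 ≤ wi.val by omega)

private lemma sweepRight (L S : Set (Fin n × Fin m)) (K : ℕ)
    (h0 : ∀ p : Fin n × Fin m, p.2.val = 0 → (GG n m).LeakyForces L S p)
    (hk : ∀ p ∈ L, p.2.val < K →
      ∀ q : Fin n × Fin m, q.1 = p.1 → q.2.val = p.2.val + 1 → (GG n m).LeakyForces L S q) :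
    ∀ p : Fin n × Fin m, p.2.val ≤ K → (GG n m).LeakyForces L S p := by
  induction K with
  | zero => intro p hp; exact h0 p (by omega)
  | succ K ih =>
    refine colStep L S K (ih ?_) ?_
    · intro p hp hlt q hq1 hq2
      exact hk p hp (by omega) q hq1 hq2
    · intro p hpk hp q hq1 hq2
      exact hk p hp (by omega) q hq1 (by omega)

private lemma sweepLeft (L S : Set (Fin n × Fin m)) (hm : 1 ≤ m) (K : ℕ)
    (h0 : ∀ p : Fin n × Fin m, p.2.val = m - 1 → (GG n m).LeakyForces L S p)
    (hk : ∀ p ∈ L, K < p.2.val →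
      ∀ q : Fin n × Fin m, q.1 = p.1 → q.2.val + 1 = p.2.val → (GG n m).LeakyForces L S q) :
    ∀ p : Fin n × Fin m, K ≤ p.2.val → (GG n m).LeakyForces L S p := by
  have aux : ∀ d : ℕ, d ≤ m - 1 - K → ∀ p : Fin n × Fin m,
      m - 1 - d ≤ p.2.val → (GG n m).LeakyForces L S p := by
    intro d
    induction d with
    | zero => intro _ p hp; exact h0 p (by have := p.2.isLt; omega)
    | succ d ih =>
      intro hd p hp
      have hkm : (m - 2 - d) + 1 < m := by omega
      refine colStep' L S (m - 2 - d) hkm ?_ ?_ p ?_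
      · intro q hq; exact ih (by omega) q (by omega)
      · intro q hq2 hqL r hr1 hr2
        exact hk q hqL (by omega) r hr1 (by omega)
      · omega
  intro p hp
  exact aux (m - 1 - K) (le_refl _) p (by omega)

private lemma sweepDown (L S : Set (Fin n × Fin m)) (K : ℕ)
    (h0 : ∀ p : Fin n × Fin m, p.1.val = 0 → (GG n m).LeakyForces L S p)
    (hk : ∀ p ∈ L, p.1.val < K →
      ∀ q : Fin n × Fin m, q.2 = p.2 → q.1.val = p.1.val + 1 → (GG n m).LeakyForces L S q) :
    ∀ p : Fin n × Fin m, p.1.val ≤ K → (GG n m).LeakyForces L S p := by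
  induction K with
  | zero => intro p hp; exact h0 p (by omega)
  | succ K ih =>
    refine rowStep L S K (ih ?_) ?_
    · intro p hp hlt q hq1 hq2
      exact hk p hp (by omega) q hq1 hq2
    · intro p hpk hp q hq1 hq2
      exact hk p hp (by omega) q hq1 (by omega)

private lemma sweepUp (L S : Set (Fin n × Fin m)) (hn : 1 ≤ n) (K : ℕ)
    (h0 : ∀ p : Fin n × Fin m, p.1.val = n - 1 → (GG n m).LeakyForces L S p)
    (hk : ∀ p ∈ L, K < p.1.val →
      ∀ q : Fin n × Fin m, q.2 = p.2 → q.1.val + 1 = p.1.val → (GG n m).LeakyForces L S q) :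
    ∀ p : Fin n × Fin m, K ≤ p.1.val → (GG n m).LeakyForces L S p := by
  have aux : ∀ d : ℕ, d ≤ n - 1 - K → ∀ p : Fin n × Fin m,
      n - 1 - d ≤ p.1.val → (GG n m).LeakyForces L S p := by
    intro d
    induction d with
    | zero => intro _ p hp; exact h0 p (by have := p.1.isLt; omega)
    | succ d ih =>
      intro hd p hp
      have hkm : (n - 2 - d) + 1 < n := by omega
      refine rowStep' L S (n - 2 - d) hkm ?_ ?_ p ?_
      · intro q hq; exact ih (by omega) q (by omega)
      · intro q hq2 hqL r hr1 hr2
        exact hk q hqL (by omega) r hr1 (by omega)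
      · omega
  intro p hp
  exact aux (n - 1 - K) (le_refl _) p (by omega)

private lemma caseCols (L S : Set (Fin n × Fin m)) (hm : 1 ≤ m) (hL : L.Subsingleton)
    (h0 : ∀ p : Fin n × Fin m, p.2.val = 0 → p ∈ S)
    (h1 : ∀ p : Fin n × Fin m, p.2.val = m - 1 → p ∈ S) :
    ∀ v, (GG n m).LeakyForces L S v := by
  intro v
  by_cases hex : ∃ x, x ∈ L
  · obtain ⟨x, hx⟩ := hex
    have A : ∀ p : Fin n × Fin m, p.2.val ≤ x.2.val → (GG n m).LeakyForces L S p := by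
      refine sweepRight L S x.2.val (fun p hp => .init p (h0 p hp)) ?_
      intro p hp hlt q _ _
      have hpx : p.2.val = x.2.val := by rw [hL hp hx]
      exact absurd hlt (by omega)
    refine sweepLeft L S hm 0 (fun p hp => .init p (h1 p hp)) ?_ v (Nat.zero_le _)
    intro p hp _ q hq1 hq2
    have hpx : p.2.val = x.2.val := by rw [hL hp hx]
    exact A q (by omega)
  · refine sweepRight L S m (fun p hp => .init p (h0 p hp)) ?_ v (le_of_lt v.2.isLt)
    intro p hp
    exact absurd ⟨p, hp⟩ hex

private lemma caseRows (L S : Set (Fin n × Fin m)) (hn : 1 ≤ n) (hL : L.Subsingleton)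
    (h0 : ∀ p : Fin n × Fin m, p.1.val = 0 → p ∈ S)
    (h1 : ∀ p : Fin n × Fin m, p.1.val = n - 1 → p ∈ S) :
    ∀ v, (GG n m).LeakyForces L S v := by
  intro v
  by_cases hex : ∃ x, x ∈ L
  · obtain ⟨x, hx⟩ := hex
    have A : ∀ p : Fin n × Fin m, p.1.val ≤ x.1.val → (GG n m).LeakyForces L S p := by
      refine sweepDown L S x.1.val (fun p hp => .init p (h0 p hp)) ?_
      intro p hp hlt q _ _
      have hpx : p.1.val = x.1.val := by rw [hL hp hx]
      exact absurd hlt (by omega)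
    refine sweepUp L S hn 0 (fun p hp => .init p (h1 p hp)) ?_ v (Nat.zero_le _)
    intro p hp _ q hq1 hq2
    have hpx : p.1.val = x.1.val := by rw [hL hp hx]
    exact A q (by omega)
  · refine sweepDown L S n (fun p hp => .init p (h0 p hp)) ?_ v (le_of_lt v.1.isLt)
    intro p hp
    exact absurd ⟨p, hp⟩ hex

/-- column 0 together with row 0 or row n-1. -/
private lemma caseCol0Row (L S : Set (Fin n × Fin m)) (hn : 1 ≤ n) (hL : L.Subsingleton)
    (h0 : ∀ p : Fin n × Fin m, p.2.val = 0 → p ∈ S)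
    (hr : (∀ p : Fin n × Fin m, p.1.val = 0 → p ∈ S) ∨
          (∀ p : Fin n × Fin m, p.1.val = n - 1 → p ∈ S)) :
    ∀ v, (GG n m).LeakyForces L S v := by
  intro v
  by_cases hex : ∃ x, x ∈ L
  · obtain ⟨x, hx⟩ := hex
    have A : ∀ p : Fin n × Fin m, p.1 = x.1 → (GG n m).LeakyForces L S p := by
      rcases hr with hr | hr
      · intro p hp
        refine sweepDown L S x.1.val (fun q hq => .init q (hr q hq)) ?_ p (by rw [hp])
        intro q hq hlt r _ _
        have hqx : q.1.val = x.1.val := by rw [hL hq hx]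
        exact absurd hlt (by omega)
      · intro p hp
        refine sweepUp L S hn x.1.val (fun q hq => .init q (hr q hq)) ?_ p (by rw [hp])
        intro q hq hlt r _ _
        have hqx : q.1.val = x.1.val := by rw [hL hq hx]
        exact absurd hlt (by omega)
    refine sweepRight L S m (fun p hp => .init p (h0 p hp)) ?_ v (le_of_lt v.2.isLt)
    intro p hp _ q hq1 _
    exact A q (by rw [hq1, hL hp hx])
  · refine sweepRight L S m (fun p hp => .init p (h0 p hp)) ?_ v (le_of_lt v.2.isLt)
    intro p hp
    exact absurd ⟨p, hp⟩ hex

/-- column m-1 together with row 0 or row n-1. -/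
private lemma caseCol1Row (L S : Set (Fin n × Fin m)) (hn : 1 ≤ n) (hm : 1 ≤ m)
    (hL : L.Subsingleton)
    (h0 : ∀ p : Fin n × Fin m, p.2.val = m - 1 → p ∈ S)
    (hr : (∀ p : Fin n × Fin m, p.1.val = 0 → p ∈ S) ∨
          (∀ p : Fin n × Fin m, p.1.val = n - 1 → p ∈ S)) :
    ∀ v, (GG n m).LeakyForces L S v := by
  intro v
  by_cases hex : ∃ x, x ∈ L
  · obtain ⟨x, hx⟩ := hex
    have A : ∀ p : Fin n × Fin m, p.1 = x.1 → (GG n m).LeakyForces L S p := by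
      rcases hr with hr | hr
      · intro p hp
        refine sweepDown L S x.1.val (fun q hq => .init q (hr q hq)) ?_ p (by rw [hp])
        intro q hq hlt r _ _
        have hqx : q.1.val = x.1.val := by rw [hL hq hx]
        exact absurd hlt (by omega)
      · intro p hp
        refine sweepUp L S hn x.1.val (fun q hq => .init q (hr q hq)) ?_ p (by rw [hp])
        intro q hq hlt r _ _
        have hqx : q.1.val = x.1.val := by rw [hL hq hx]
        exact absurd hlt (by omega)
    refine sweepLeft L S hm 0 (fun p hp => .init p (h0 p hp)) ?_ v (Nat.zero_le _)
    intro p hp _ q hq1 _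
    exact A q (by rw [hq1, hL hp hx])
  · refine sweepLeft L S hm 0 (fun p hp => .init p (h0 p hp)) ?_ v (Nat.zero_le _)
    intro p hp
    exact absurd ⟨p, hp⟩ hex

end Aux

theorem grid_two_sides_one_forcing (n m : ℕ) (hn : 1 ≤ n) (hm : 1 ≤ m) :
    ∀ S₁ ∈ ({ {p | p.1 = ⟨0, by omega⟩}, {p | p.1 = ⟨n - 1, by omega⟩},
              {p | p.2 = ⟨0, by omega⟩}, {p | p.2 = ⟨m - 1, by omega⟩} } :
        Set (Set (Fin n × Fin m))),
    ∀ S₂ ∈ ({ {p | p.1 = ⟨0, by omega⟩}, {p | p.1 = ⟨n - 1, by omega⟩},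
              {p | p.2 = ⟨0, by omega⟩}, {p | p.2 = ⟨m - 1, by omega⟩} } :
        Set (Set (Fin n × Fin m))),
    S₁ ≠ S₂ →
      (SimpleGraph.pathGraph n □ SimpleGraph.pathGraph m).IsLeakyForcingSet 1 (S₁ ∪ S₂) := by
  intro S₁ hS₁ S₂ hS₂ hne L hcard v
  have hL : (↑L : Set (Fin n × Fin m)).Subsingleton := fun a ha b hb =>
    Finset.card_le_one.mp hcard a (Finset.mem_coe.mp ha) b (Finset.mem_coe.mp hb)
  simp only [Set.mem_insert_iff, Set.mem_singleton_iff] at hS₁ hS₂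
  rcases hS₁ with h1 | h1 | h1 | h1 <;> rcases hS₂ with h2 | h2 | h2 | h2 <;>
    subst h1 <;> subst h2
  · exact absurd rfl hne
  · refine caseRows ↑L _ hn hL ?_ ?_ v <;>
      (intro p hp; simp only [Set.mem_union, Set.mem_setOf_eq];
        first | exact Or.inl (Fin.ext hp) | exact Or.inr (Fin.ext hp))
  · refine caseCol0Row ↑L _ hn hL ?_ (Or.inl ?_) v <;>
      (intro p hp; simp only [Set.mem_union, Set.mem_setOf_eq];
        first | exact Or.inl (Fin.ext hp) | exact Or.inr (Fin.ext hp))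
  · refine caseCol1Row ↑L _ hn hm hL ?_ (Or.inl ?_) v <;>
      (intro p hp; simp only [Set.mem_union, Set.mem_setOf_eq];
        first | exact Or.inl (Fin.ext hp) | exact Or.inr (Fin.ext hp))
  · refine caseRows ↑L _ hn hL ?_ ?_ v <;>
      (intro p hp; simp only [Set.mem_union, Set.mem_setOf_eq];
        first | exact Or.inl (Fin.ext hp) | exact Or.inr (Fin.ext hp))
  · exact absurd rfl hne
  · refine caseCol0Row ↑L _ hn hL ?_ (Or.inr ?_) v <;>
      (intro p hp; simp only [Set.mem_union, Set.mem_setOf_eq];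
        first | exact Or.inl (Fin.ext hp) | exact Or.inr (Fin.ext hp))
  · refine caseCol1Row ↑L _ hn hm hL ?_ (Or.inr ?_) v <;>
      (intro p hp; simp only [Set.mem_union, Set.mem_setOf_eq];
        first | exact Or.inl (Fin.ext hp) | exact Or.inr (Fin.ext hp))
  · refine caseCol0Row ↑L _ hn hL ?_ (Or.inl ?_) v <;>
      (intro p hp; simp only [Set.mem_union, Set.mem_setOf_eq];
        first | exact Or.inl (Fin.ext hp) | exact Or.inr (Fin.ext hp))
  · refine caseCol0Row ↑L _ hn hL ?_ (Or.inr ?_) v <;>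
      (intro p hp; simp only [Set.mem_union, Set.mem_setOf_eq];
        first | exact Or.inl (Fin.ext hp) | exact Or.inr (Fin.ext hp))
  · exact absurd rfl hne
  · refine caseCols ↑L _ hm hL ?_ ?_ v <;>
      (intro p hp; simp only [Set.mem_union, Set.mem_setOf_eq];
        first | exact Or.inl (Fin.ext hp) | exact Or.inr (Fin.ext hp))
  · refine caseCol1Row ↑L _ hn hm hL ?_ (Or.inl ?_) v <;>
      (intro p hp; simp only [Set.mem_union, Set.mem_setOf_eq];
        first | exact Or.inl (Fin.ext hp) | exact Or.inr (Fin.ext hp))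
  · refine caseCol1Row ↑L _ hn hm hL ?_ (Or.inr ?_) v <;>
      (intro p hp; simp only [Set.mem_union, Set.mem_setOf_eq];
        first | exact Or.inl (Fin.ext hp) | exact Or.inr (Fin.ext hp))
  · refine caseCols ↑L _ hm hL ?_ ?_ v <;>
      (intro p hp; simp only [Set.mem_union, Set.mem_setOf_eq];
        first | exact Or.inl (Fin.ext hp) | exact Or.inr (Fin.ext hp))
  · exact absurd rfl hne
end

section
/- For every n ≥ 1, the 1-forcing number of the square grid P_n □ P_n equals n. -/
open SimpleGraph

namespace GridForcing

variable {n : ℕ}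

abbrev V (n : ℕ) := Fin n × Fin n

abbrev G (n : ℕ) : SimpleGraph (V n) := SimpleGraph.pathGraph n □ SimpleGraph.pathGraph n

def vtx (i j : ℕ) (hi : i < n) (hj : j < n) : V n := (⟨i, hi⟩, ⟨j, hj⟩)

lemma eq_vtx (w : V n) {a b : ℕ} (ha : a < n) (hb : b < n)
    (h1 : w.1.val = a) (h2 : w.2.val = b) : w = vtx a b ha hb :=
  Prod.ext (Fin.ext h1) (Fin.ext h2)

lemma adj_cases {u w : V n} (h : (G n).Adj u w) :
    (w.1.val = u.1.val ∧ w.2.val = u.2.val + 1) ∨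
    (w.1.val = u.1.val ∧ w.2.val + 1 = u.2.val) ∨
    (w.2.val = u.2.val ∧ w.1.val = u.1.val + 1) ∨
    (w.2.val = u.2.val ∧ w.1.val + 1 = u.1.val) := by
  rcases (boxProd_adj).1 h with ⟨h1, h2⟩ | ⟨h1, h2⟩
  · rcases pathGraph_adj.1 h1 with h3 | h3
    · exact Or.inr (Or.inr (Or.inl ⟨(congrArg Fin.val h2).symm, h3.symm⟩))
    · exact Or.inr (Or.inr (Or.inr ⟨(congrArg Fin.val h2).symm, h3⟩))
  · rcases pathGraph_adj.1 h1 with h3 | h3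
    · exact Or.inl ⟨(congrArg Fin.val h2).symm, h3.symm⟩
    · exact Or.inr (Or.inl ⟨(congrArg Fin.val h2).symm, h3⟩)

lemma adj_coord {i j ti tj : ℕ} (hi : i < n) (hj : j < n) (hti : ti < n) (htj : tj < n)
    (hadj : (ti = i ∧ (tj = j + 1 ∨ tj + 1 = j)) ∨ (tj = j ∧ (ti = i + 1 ∨ ti + 1 = i))) :
    (G n).Adj (vtx i j hi hj) (vtx ti tj hti htj) := by
  apply (boxProd_adj).2
  rcases hadj with ⟨h1, h2⟩ | ⟨h1, h2⟩
  · refine Or.inr ⟨pathGraph_adj.2 ?_, Fin.ext h1.symm⟩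
    rcases h2 with h2 | h2
    · exact Or.inl h2.symm
    · exact Or.inr h2
  · refine Or.inl ⟨pathGraph_adj.2 ?_, Fin.ext h1.symm⟩
    rcases h2 with h2 | h2
    · exact Or.inl h2.symm
    · exact Or.inr h2

section ForceCoord

variable {L S : Set (V n)}

/-- Master forcing step in coordinates: the vertex at `(i,j)` forces the target `(ti,tj)`. -/
lemma force_coord {i j ti tj : ℕ} (hi : i < n) (hj : j < n) (hti : ti < n) (htj : tj < n)
    (hadj : (ti = i ∧ (tj = j + 1 ∨ tj + 1 = j)) ∨ (tj = j ∧ (ti = i + 1 ∨ ti + 1 = i)))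
    (hu : vtx i j hi hj ∉ L)
    (hP : (G n).LeakyForces L S (vtx i j hi hj))
    (h1 : ∀ i' (hi' : i' < n), i' + 1 = i → ¬(i' = ti ∧ j = tj) →
        (G n).LeakyForces L S (vtx i' j hi' hj))
    (h2 : ∀ (hi' : i + 1 < n), ¬(i + 1 = ti ∧ j = tj) →
        (G n).LeakyForces L S (vtx (i+1) j hi' hj))
    (h3 : ∀ j' (hj' : j' < n), j' + 1 = j → ¬(i = ti ∧ j' = tj) →
        (G n).LeakyForces L S (vtx i j' hi hj'))
    (h4 : ∀ (hj' : j + 1 < n), ¬(i = ti ∧ j + 1 = tj) →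
        (G n).LeakyForces L S (vtx i (j+1) hi hj')) :
    (G n).LeakyForces L S (vtx ti tj hti htj) := by
  refine SimpleGraph.LeakyForces.force (vtx i j hi hj) _ hu hP (adj_coord hi hj hti htj hadj) ?_
  intro w hw hne
  obtain ⟨⟨wi, hwi⟩, ⟨wj, hwj⟩⟩ := w
  have hne' : ¬(wi = ti ∧ wj = tj) := by rintro ⟨rfl, rfl⟩; exact hne rfl
  rcases adj_cases hw with ⟨e1, e2⟩ | ⟨e1, e2⟩ | ⟨e1, e2⟩ | ⟨e1, e2⟩
  · -- w = (i, j+1)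
    have f1 : wi = i := e1
    have f2 : wj = j + 1 := e2
    subst f1; subst f2
    exact h4 hwj hne'
  · -- w = (i, j-1)
    have f1 : wi = i := e1
    have f2 : wj + 1 = j := e2
    subst f1
    exact h3 wj hwj f2 hne'
  · -- w = (i+1, j)
    have f1 : wj = j := e1
    have f2 : wi = i + 1 := e2
    subst f1; subst f2
    exact h2 hwi hne'
  · -- w = (i-1, j)
    have f1 : wj = j := e1
    have f2 : wi + 1 = i := e2
    subst f1
    exact h1 wi hwi f2 hne'

end ForceCoord

/-- The staircase set. -/
def Sstair (n : ℕ) : Finset (V n) :=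
  Finset.univ.filter
    (fun v => (v.2.val = v.1.val ∨ v.2.val = v.1.val + 1) ∧ v.1.val + v.2.val + 1 ≤ n)

lemma card_Sstair (n : ℕ) : (Sstair n).card = n := by
  have h : (Sstair n).card = (Finset.range n).card := by
    apply Finset.card_bij' (fun v _ => v.1.val + v.2.val)
        (fun k hk => vtx (k / 2) ((k + 1) / 2)
          (by simp only [Finset.mem_range] at hk; omega)
          (by simp only [Finset.mem_range] at hk; omega))
    case hi =>
      intro v hv
      simp only [Sstair, Finset.mem_filter, Finset.mem_univ, true_and] at hv
      simp only [Finset.mem_range]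
      omega
    case hj =>
      intro k hk
      simp only [Finset.mem_range] at hk
      refine Finset.mem_filter.2 ⟨Finset.mem_univ _, ?_⟩
      show ((k + 1) / 2 = k / 2 ∨ (k + 1) / 2 = k / 2 + 1) ∧ k / 2 + (k + 1) / 2 + 1 ≤ n
      omega
    case left_inv =>
      intro v hv
      simp only [Sstair, Finset.mem_filter, Finset.mem_univ, true_and] at hv
      refine ((eq_vtx v ?_ ?_ ?_ ?_).symm) <;> omega
    case right_inv =>
      intro k hk
      show k / 2 + (k + 1) / 2 = k
      simp only [Finset.mem_range] at hk
      omega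
  simpa using h

variable {L : Set (V n)} {a b : ℕ}

lemma memS {i j : ℕ} (hi : i < n) (hj : j < n) (h1 : j = i ∨ j = i + 1)
    (h2 : i + j + 1 ≤ n) : (G n).LeakyForces L ↑(Sstair n) (vtx i j hi hj) := by
  refine SimpleGraph.LeakyForces.init _ (Finset.mem_coe.2 (Finset.mem_filter.2
    ⟨Finset.mem_univ _, ?_⟩))
  show (j = i ∨ j = i + 1) ∧ i + j + 1 ≤ n
  exact ⟨h1, h2⟩

lemma meas_lt {q' q i' i : ℕ} (h : q' < q) (hi' : i' < n) : q' * n + i' < q * n + i :=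
  calc q' * n + i' < q' * n + n := by omega
  _ = (q' + 1) * n := by ring
  _ ≤ q * n := Nat.mul_le_mul_right n h
  _ ≤ q * n + i := Nat.le_add_right _ _

lemma not_leak_ne {ha : a < n} {hb : b < n} (hL : L ⊆ {vtx a b ha hb}) {i j : ℕ}
    {hi : i < n} {hj : j < n} (h : ¬(i = a ∧ j = b)) : vtx i j hi hj ∉ L := by
  intro hm
  have h2 := hL hm
  rw [Set.mem_singleton_iff] at h2
  exact h ⟨congrArg (fun v : V n => v.1.val) h2, congrArg (fun v : V n => v.2.val) h2⟩

lemma not_leak_upper {ha : a < n} {hb : b < n} (hL : L ⊆ {vtx a b ha hb}) (hba : b ≤ a)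
    {i j : ℕ} (hij : i < j) {hi : i < n} {hj : j < n} : vtx i j hi hj ∉ L :=
  not_leak_ne hL (by omega)

lemma not_leak_lower {ha : a < n} {hb : b < n} (hL : L ⊆ {vtx a b ha hb}) (hab : a < b)
    {i j : ℕ} (hij : j ≤ i) {hi : i < n} {hj : j < n} : vtx i j hi hj ∉ L :=
  not_leak_ne hL (by omega)

/-- Phase A1: the triangle `{(i,j) : i ≤ j, i+j ≤ n-1}` gets colored (leak below diagonal). -/
lemma sweepA1 {ha : a < n} {hb : b < n} (hL : L ⊆ {vtx a b ha hb}) (hba : b ≤ a) : ∀ μ i j (hi : i < n) (hj : j < n), i ≤ j → i + j + 1 ≤ n →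
    (j - i) * n + i = μ → (G n).LeakyForces L ↑(Sstair n) (vtx i j hi hj) := by
  intro μ
  induction μ using Nat.strong_induction_on with
  | _ μ IH =>
  intro i j hi hj hij hsum hμ
  subst hμ
  by_cases hc : j ≤ i + 1
  · exact memS hi hj (by omega) hsum
  · have hj1 : j - 1 < n := by omega
    refine force_coord (i := i) (j := j - 1) hi hj1 hi hj
      (Or.inl ⟨rfl, Or.inl (by omega)⟩)
      (not_leak_upper (i := i) (j := j - 1) hL hba (by omega)) ?_ ?_ ?_ ?_ ?_
    · -- forcer (i, j-1)
      exact IH ((j - 1 - i) * n + i) (meas_lt (by omega) hi) i (j-1) hi hj1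
        (by omega) (by omega) rfl
    · -- (i-1, j-1)
      intro i' hi' hie _
      refine IH ((j - 1 - i') * n + i') ?_ i' (j-1) hi' hj1 (by omega) (by omega) rfl
      have e : j - 1 - i' = j - i := by omega
      rw [e]; exact Nat.add_lt_add_left (by omega) _
    · -- (i+1, j-1)
      intro hi1 _
      exact IH ((j - 1 - (i+1)) * n + (i+1)) (meas_lt (by omega) hi1) (i+1) (j-1) hi1 hj1
        (by omega) (by omega) rfl
    · -- (i, j-2)
      intro j' hj' hje _
      exact IH ((j' - i) * n + i) (meas_lt (by omega) hi) i j' hi hj' (by omega) (by omega) rfl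
    · -- (i, j) : target
      intro hj' hne
      exact absurd ⟨rfl, by omega⟩ hne

/-- Phase A2: the whole upper triangle `{(i,j) : i ≤ j}` (leak below diagonal). -/
lemma sweepA2 {ha : a < n} {hb : b < n} (hL : L ⊆ {vtx a b ha hb}) (hba : b ≤ a) : ∀ μ i j (hi : i < n) (hj : j < n), i ≤ j →
    (i + j) * n + i = μ → (G n).LeakyForces L ↑(Sstair n) (vtx i j hi hj) := by
  intro μ
  induction μ using Nat.strong_induction_on with
  | _ μ IH =>
  intro i j hi hj hij hμ
  subst hμ
  by_cases hsum : i + j + 1 ≤ n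
  · exact sweepA1 hL hba _ i j hi hj hij hsum rfl
  · have hi1 : 1 ≤ i := by omega
    refine force_coord (i := i - 1) (j := j) (by omega) hj hi hj
      (Or.inr ⟨rfl, Or.inl (by omega)⟩)
      (not_leak_upper (i := i - 1) (j := j) hL hba (by omega)) ?_ ?_ ?_ ?_ ?_
    · -- forcer (i-1, j)
      exact IH ((i - 1 + j) * n + (i - 1)) (meas_lt (by omega) (by omega)) (i-1) j
        (by omega) hj (by omega) rfl
    · -- (i-2, j)
      intro i' hi' hie _
      exact IH ((i' + j) * n + i') (meas_lt (by omega) hi') i' j hi' hj (by omega) rfl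
    · -- (i, j) : target
      intro _ hne
      exact absurd ⟨by omega, rfl⟩ hne
    · -- (i-1, j-1)
      intro j' hj' hje _
      exact IH ((i - 1 + j') * n + (i - 1)) (meas_lt (by omega) (by omega)) (i-1) j'
        (by omega) hj' (by omega) rfl
    · -- (i-1, j+1)
      intro hj' _
      refine IH ((i - 1 + (j + 1)) * n + (i - 1)) ?_ (i-1) (j+1) (by omega) hj' (by omega) rfl
      have e : i - 1 + (j + 1) = i + j := by omega
      rw [e]; exact Nat.add_lt_add_left (by omega) _

/-- Measure for phase A3. -/
def muA (n a b i j : ℕ) : ℕ :=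
  if i ≤ j then 0 else (i - j) * n + (if i - j = a - b + 1 ∧ i ≤ a then i else n - 1 - i)

lemma muA_lt {i j i' j' : ℕ} (hij : j < i) (hij' : j' < i') (hi' : i' < n)
    (h : i' - j' < i - j) : muA n a b i' j' < muA n a b i j := by
  rw [muA, muA, if_neg (show ¬ i ≤ j by omega), if_neg (show ¬ i' ≤ j' by omega)]
  split_ifs <;> exact meas_lt h (by omega)

/-- Phase A3: everything gets colored when the leak is on or below the diagonal. -/
lemma sweepA3 {ha : a < n} {hb : b < n} (hL : L ⊆ {vtx a b ha hb}) (hba : b ≤ a) :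
    ∀ μ i j (hi : i < n) (hj : j < n),
    muA n a b i j = μ → (G n).LeakyForces L ↑(Sstair n) (vtx i j hi hj) := by
  intro μ
  induction μ using Nat.strong_induction_on with
  | _ μ IH =>
  intro i j hi hj hμ
  subst hμ
  by_cases hij : i ≤ j
  · exact sweepA2 hL hba _ i j hi hj hij rfl
  · push_neg at hij   -- j < i
    by_cases hmode : i - j = a - b + 1 ∧ i ≤ a
    · -- DOWN mode : forcer (i-1, j)
      have ht : muA n a b i j = (i - j) * n + i := by
        unfold muA; rw [if_neg (by omega), if_pos hmode]
      refine force_coord (i := i - 1) (j := j) (by omega) hj hi hj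
        (Or.inr ⟨rfl, Or.inl (by omega)⟩)
        (not_leak_ne (i := i - 1) (j := j) hL (by omega)) ?_ ?_ ?_ ?_ ?_
      · -- forcer (i-1, j)
        by_cases hd : i - 1 ≤ j
        · exact sweepA2 hL hba _ (i-1) j (by omega) hj hd rfl
        · refine IH (muA n a b (i-1) j) ?_ (i-1) j (by omega) hj rfl
          exact muA_lt (by omega) (by omega) (by omega) (by omega)
      · -- (i-2, j)
        intro i' hi' hie _
        by_cases hd : i' ≤ j
        · exact sweepA2 hL hba _ i' j hi' hj hd rfl
        · refine IH (muA n a b i' j) ?_ i' j hi' hj rfl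
          exact muA_lt (by omega) (by omega) hi' (by omega)
      · -- (i, j) : target
        intro _ hne
        exact absurd ⟨by omega, rfl⟩ hne
      · -- (i-1, j-1) : same diagonal, down chain
        intro j' hj' hje _
        refine IH (muA n a b (i-1) j') ?_ (i-1) j' (by omega) hj' rfl
        rw [ht]
        unfold muA
        rw [if_neg (by omega), if_pos ⟨by omega, by omega⟩]
        have e : i - 1 - j' = i - j := by omega
        rw [e]
        exact Nat.add_lt_add_left (by omega) _
      · -- (i-1, j+1)
        intro hj1 _
        by_cases hd : i - 1 ≤ j + 1
        · exact sweepA2 hL hba _ (i-1) (j+1) (by omega) hj1 hd rfl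
        · refine IH (muA n a b (i-1) (j+1)) ?_ (i-1) (j+1) (by omega) hj1 rfl
          exact muA_lt (by omega) (by omega) (by omega) (by omega)
    · -- UP mode : forcer (i, j+1)
      have hj1 : j + 1 < n := by omega
      have ht : muA n a b i j = (i - j) * n + (n - 1 - i) := by
        unfold muA; rw [if_neg (by omega), if_neg hmode]
      refine force_coord (i := i) (j := j + 1) hi hj1 hi hj
        (Or.inl ⟨rfl, Or.inr (by omega)⟩)
        (not_leak_ne (i := i) (j := j + 1) hL
          (by rintro ⟨e1, e2⟩; exact hmode ⟨by omega, by omega⟩)) ?_ ?_ ?_ ?_ ?_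
      · -- forcer (i, j+1)
        by_cases hd : i ≤ j + 1
        · exact sweepA2 hL hba _ i (j+1) hi hj1 hd rfl
        · refine IH (muA n a b i (j+1)) ?_ i (j+1) hi hj1 rfl
          exact muA_lt (by omega) (by omega) hi (by omega)
      · -- (i-1, j+1)
        intro i' hi' hie _
        by_cases hd : i' ≤ j + 1
        · exact sweepA2 hL hba _ i' (j+1) hi' hj1 hd rfl
        · refine IH (muA n a b i' (j+1)) ?_ i' (j+1) hi' hj1 rfl
          exact muA_lt (by omega) (by omega) hi' (by omega)
      · -- (i+1, j+1) : same diagonal, up chain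
        intro hi1 _
        refine IH (muA n a b (i+1) (j+1)) ?_ (i+1) (j+1) hi1 hj1 rfl
        rw [ht]
        unfold muA
        rw [if_neg (by omega), if_neg (by rintro ⟨e1, e2⟩; exact hmode ⟨by omega, by omega⟩)]
        have e : i + 1 - (j + 1) = i - j := by omega
        rw [e]
        exact Nat.add_lt_add_left (by omega) _
      · -- (i, j) : target
        intro j' hj' hje hne
        exact absurd ⟨rfl, by omega⟩ hne
      · -- (i, j+2)
        intro hj2 _
        by_cases hd : i ≤ j + 2
        · exact sweepA2 hL hba _ i (j+2) hi hj2 hd rfl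
        · refine IH (muA n a b i (j+2)) ?_ i (j+2) hi hj2 rfl
          exact muA_lt (by omega) (by omega) hi (by omega)

lemma caseA {ha : a < n} {hb : b < n} (hL : L ⊆ {vtx a b ha hb}) (hba : b ≤ a) : ∀ v, (G n).LeakyForces L ↑(Sstair n) v := by
  intro v
  have h := sweepA3 hL hba (muA n a b v.1.val v.2.val) v.1.val v.2.val
    v.1.isLt v.2.isLt rfl
  exact (eq_vtx v v.1.isLt v.2.isLt rfl rfl).symm ▸ h

/-- Phase B1: the triangle `{(i,j) : j ≤ i+1, i+j ≤ n-1}` (leak strictly above diagonal). -/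
lemma sweepB1 {ha : a < n} {hb : b < n} (hL : L ⊆ {vtx a b ha hb}) (hab : a < b) :
    ∀ μ i j (hi : i < n) (hj : j < n), j ≤ i + 1 → i + j + 1 ≤ n →
    (i - j) * n + j = μ → (G n).LeakyForces L ↑(Sstair n) (vtx i j hi hj) := by
  intro μ
  induction μ using Nat.strong_induction_on with
  | _ μ IH =>
  intro i j hi hj hij hsum hμ
  subst hμ
  by_cases hc : i ≤ j
  · exact memS hi hj (by omega) hsum
  · -- i ≥ j + 1, forcer (i-1, j), target (i,j)
    refine force_coord (i := i - 1) (j := j) (by omega) hj hi hj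
      (Or.inr ⟨rfl, Or.inl (by omega)⟩)
      (not_leak_lower (i := i - 1) (j := j) hL hab (by omega)) ?_ ?_ ?_ ?_ ?_
    · -- forcer (i-1, j)
      exact IH ((i - 1 - j) * n + j) (meas_lt (by omega) hj) (i-1) j (by omega) hj
        (by omega) (by omega) rfl
    · -- (i-2, j)
      intro i' hi' hie _
      exact IH ((i' - j) * n + j) (meas_lt (by omega) hj) i' j hi' hj (by omega)
        (by omega) rfl
    · -- (i, j) : target
      intro _ hne
      exact absurd ⟨by omega, rfl⟩ hne
    · -- (i-1, j-1) : same diagonal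
      intro j' hj' hje _
      refine IH ((i - 1 - j') * n + j') ?_ (i-1) j' (by omega) hj' (by omega) (by omega) rfl
      have e : i - 1 - j' = i - j := by omega
      rw [e]
      exact Nat.add_lt_add_left (by omega) _
    · -- (i-1, j+1)
      intro hj1 _
      exact IH ((i - 1 - (j + 1)) * n + (j + 1)) (meas_lt (by omega) hj1) (i-1) (j+1)
        (by omega) hj1 (by omega) (by omega) rfl

/-- Phase B2: the whole lower region `{(i,j) : j ≤ i+1}` (leak strictly above diagonal). -/
lemma sweepB2 {ha : a < n} {hb : b < n} (hL : L ⊆ {vtx a b ha hb}) (hab : a < b) :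
    ∀ μ i j (hi : i < n) (hj : j < n), j ≤ i + 1 →
    (i + j) * n + j = μ → (G n).LeakyForces L ↑(Sstair n) (vtx i j hi hj) := by
  intro μ
  induction μ using Nat.strong_induction_on with
  | _ μ IH =>
  intro i j hi hj hij hμ
  subst hμ
  by_cases hsum : i + j + 1 ≤ n
  · exact sweepB1 hL hab _ i j hi hj hij hsum rfl
  · have hj1 : 1 ≤ j := by omega
    refine force_coord (i := i) (j := j - 1) hi (by omega) hi hj
      (Or.inl ⟨rfl, Or.inl (by omega)⟩)
      (not_leak_lower (i := i) (j := j - 1) hL hab (by omega)) ?_ ?_ ?_ ?_ ?_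
    · -- forcer (i, j-1)
      exact IH ((i + (j - 1)) * n + (j - 1)) (meas_lt (by omega) (by omega)) i (j-1) hi
        (by omega) (by omega) rfl
    · -- (i-1, j-1)
      intro i' hi' hie _
      exact IH ((i' + (j - 1)) * n + (j - 1)) (meas_lt (by omega) (by omega)) i' (j-1)
        hi' (by omega) (by omega) rfl
    · -- (i+1, j-1) : same anti-diagonal
      intro hi1 _
      refine IH ((i + 1 + (j - 1)) * n + (j - 1)) ?_ (i+1) (j-1) hi1 (by omega)
        (by omega) rfl
      have e : i + 1 + (j - 1) = i + j := by omega
      rw [e]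
      exact Nat.add_lt_add_left (by omega) _
    · -- (i, j-2)
      intro j' hj' hje _
      exact IH ((i + j') * n + j') (meas_lt (by omega) (by omega)) i j' hi hj'
        (by omega) rfl
    · -- (i, j) : target
      intro _ hne
      exact absurd ⟨rfl, by omega⟩ hne

/-- Measure for phase B3. -/
def muB (n a b i j : ℕ) : ℕ :=
  if j ≤ i + 1 then 0 else (j - i) * n + (if j - i = b - a + 1 ∧ a ≤ i then n - 1 - i else i)

lemma muB_lt {i j i' j' : ℕ} (hij : i + 1 < j) (hij' : i' + 1 < j') (hi' : i' < n)
    (h : j' - i' < j - i) : muB n a b i' j' < muB n a b i j := by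
  rw [muB, muB, if_neg (show ¬ j ≤ i + 1 by omega), if_neg (show ¬ j' ≤ i' + 1 by omega)]
  split_ifs <;> exact meas_lt h (by omega)

/-- Phase B3: everything gets colored when the leak is strictly above the diagonal. -/
lemma sweepB3 {ha : a < n} {hb : b < n} (hL : L ⊆ {vtx a b ha hb}) (hab : a < b) :
    ∀ μ i j (hi : i < n) (hj : j < n),
    muB n a b i j = μ → (G n).LeakyForces L ↑(Sstair n) (vtx i j hi hj) := by
  intro μ
  induction μ using Nat.strong_induction_on with
  | _ μ IH =>
  intro i j hi hj hμ
  subst hμ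
  by_cases hij : j ≤ i + 1
  · exact sweepB2 hL hab _ i j hi hj hij rfl
  · push_neg at hij   -- i + 1 < j
    by_cases hmode : j - i = b - a + 1 ∧ a ≤ i
    · -- D mode : forcer (i+1, j)
      have hi1 : i + 1 < n := by omega
      have ht : muB n a b i j = (j - i) * n + (n - 1 - i) := by
        unfold muB; rw [if_neg (by omega), if_pos hmode]
      refine force_coord (i := i + 1) (j := j) hi1 hj hi hj
        (Or.inr ⟨rfl, Or.inr (by omega)⟩)
        (not_leak_ne (i := i + 1) (j := j) hL (by omega)) ?_ ?_ ?_ ?_ ?_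
      · -- forcer (i+1, j)
        by_cases hd : j ≤ i + 2
        · exact sweepB2 hL hab _ (i+1) j hi1 hj (by omega) rfl
        · refine IH (muB n a b (i+1) j) ?_ (i+1) j hi1 hj rfl
          exact muB_lt (by omega) (by omega) hi1 (by omega)
      · -- (i, j) : target
        intro i' hi' hie hne
        exact absurd ⟨by omega, rfl⟩ hne
      · -- (i+2, j)
        intro hi2 _
        by_cases hd : j ≤ i + 3
        · exact sweepB2 hL hab _ (i+2) j hi2 hj (by omega) rfl
        · refine IH (muB n a b (i+2) j) ?_ (i+2) j hi2 hj rfl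
          exact muB_lt (by omega) (by omega) hi2 (by omega)
      · -- (i+1, j-1)
        intro j' hj' hje _
        by_cases hd : j' ≤ i + 2
        · exact sweepB2 hL hab _ (i+1) j' hi1 hj' (by omega) rfl
        · refine IH (muB n a b (i+1) j') ?_ (i+1) j' hi1 hj' rfl
          exact muB_lt (by omega) (by omega) hi1 (by omega)
      · -- (i+1, j+1) : same diagonal, up chain
        intro hj1 _
        refine IH (muB n a b (i+1) (j+1)) ?_ (i+1) (j+1) hi1 hj1 rfl
        rw [ht]
        unfold muB
        rw [if_neg (by omega), if_pos ⟨by omega, by omega⟩]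
        have e : j + 1 - (i + 1) = j - i := by omega
        rw [e]
        exact Nat.add_lt_add_left (by omega) _
    · -- R mode : forcer (i, j-1)
      have ht : muB n a b i j = (j - i) * n + i := by
        unfold muB; rw [if_neg (by omega), if_neg hmode]
      refine force_coord (i := i) (j := j - 1) hi (by omega) hi hj
        (Or.inl ⟨rfl, Or.inl (by omega)⟩)
        (not_leak_ne (i := i) (j := j - 1) hL
          (by rintro ⟨e1, e2⟩; exact hmode ⟨by omega, by omega⟩)) ?_ ?_ ?_ ?_ ?_
      · -- forcer (i, j-1)
        by_cases hd : j - 1 ≤ i + 1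
        · exact sweepB2 hL hab _ i (j-1) hi (by omega) hd rfl
        · refine IH (muB n a b i (j-1)) ?_ i (j-1) hi (by omega) rfl
          exact muB_lt (by omega) (by omega) hi (by omega)
      · -- (i-1, j-1) : same diagonal, down chain
        intro i' hi' hie _
        refine IH (muB n a b i' (j-1)) ?_ i' (j-1) hi' (by omega) rfl
        rw [ht]
        unfold muB
        rw [if_neg (by omega), if_neg (by rintro ⟨e1, e2⟩; exact hmode ⟨by omega, by omega⟩)]
        have e : j - 1 - i' = j - i := by omega
        rw [e]
        exact Nat.add_lt_add_left (by omega) _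
      · -- (i+1, j-1)
        intro hi1 _
        by_cases hd : j - 1 ≤ i + 2
        · exact sweepB2 hL hab _ (i+1) (j-1) hi1 (by omega) (by omega) rfl
        · refine IH (muB n a b (i+1) (j-1)) ?_ (i+1) (j-1) hi1 (by omega) rfl
          exact muB_lt (by omega) (by omega) hi1 (by omega)
      · -- (i, j-2)
        intro j' hj' hje _
        by_cases hd : j' ≤ i + 1
        · exact sweepB2 hL hab _ i j' hi hj' hd rfl
        · refine IH (muB n a b i j') ?_ i j' hi hj' rfl
          exact muB_lt (by omega) (by omega) hi (by omega)
      · -- (i, j) : target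
        intro hj1 hne
        exact absurd ⟨rfl, by omega⟩ hne

lemma caseB {ha : a < n} {hb : b < n} (hL : L ⊆ {vtx a b ha hb}) (hab : a < b) :
    ∀ v, (G n).LeakyForces L ↑(Sstair n) v := by
  intro v
  have h := sweepB3 hL hab (muB n a b v.1.val v.2.val) v.1.val v.2.val v.1.isLt v.2.isLt rfl
  exact (eq_vtx v v.1.isLt v.2.isLt rfl rfl).symm ▸ h

/-- The staircase is a 1-forcing set. -/
lemma stair_forcing (n : ℕ) : (G n).IsLeakyForcingSet 1 ↑(Sstair n) := by
  intro Lf hcard v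
  haveI : Nonempty (V n) := ⟨v⟩
  obtain ⟨x, hx⟩ := Finset.card_le_one_iff_subset_singleton.1 hcard
  have hL : (↑Lf : Set (V n)) ⊆ {vtx x.1.val x.2.val x.1.isLt x.2.isLt} := by
    intro y hy
    have hyx : y = x := Finset.mem_singleton.1 (hx (by exact_mod_cast hy))
    rw [Set.mem_singleton_iff, hyx]
    exact eq_vtx x x.1.isLt x.2.isLt rfl rfl
  by_cases hcase : x.2.val ≤ x.1.val
  · exact caseA hL hcase v
  · exact caseB hL (by omega) v

/-! ### Lower bound -/

/-- Path adjacency matrix. -/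
def Bmat (n : ℕ) : Matrix (Fin n) (Fin n) ℝ :=
  fun x y => if x.val + 1 = y.val ∨ y.val + 1 = x.val then 1 else 0

lemma Bmat_symm (x y : Fin n) : Bmat n x y = Bmat n y x := by
  simp only [Bmat]
  exact if_congr or_comm rfl rfl

/-- Grid matrix `B ⊗ I - I ⊗ B`, supported on the grid's adjacency. -/
def Amat (n : ℕ) : Matrix (V n) (V n) ℝ :=
  fun u v => (if u.2 = v.2 then Bmat n u.1 v.1 else 0) - (if u.1 = v.1 then Bmat n u.2 v.2 else 0)

lemma Amat_ne_zero_of_adj {u v : V n} (h : (G n).Adj u v) : Amat n u v ≠ 0 := by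
  have hval : ∀ x y : Fin n, x.val ≠ y.val → x ≠ y := fun x y hxy he => hxy (congrArg Fin.val he)
  rcases adj_cases h with ⟨e1, e2⟩ | ⟨e1, e2⟩ | ⟨e1, e2⟩ | ⟨e1, e2⟩
  · -- v.1 = u.1, v.2 = u.2 + 1
    simp only [Amat, Bmat]
    rw [if_neg (fun hq => by have := congrArg Fin.val hq; omega),
      if_pos (Fin.ext e1.symm), if_pos (Or.inl e2.symm)]
    norm_num
  · simp only [Amat, Bmat]
    rw [if_neg (fun hq => by have := congrArg Fin.val hq; omega),
      if_pos (Fin.ext e1.symm), if_pos (Or.inr e2)]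
    norm_num
  · -- v.2 = u.2, v.1 = u.1 + 1
    simp only [Amat, Bmat]
    rw [if_pos (Fin.ext e1.symm), if_pos (Or.inl e2.symm),
      if_neg (fun hq => by have := congrArg Fin.val hq; omega)]
    norm_num
  · simp only [Amat, Bmat]
    rw [if_pos (Fin.ext e1.symm), if_pos (Or.inr e2),
      if_neg (fun hq => by have := congrArg Fin.val hq; omega)]
    norm_num

lemma Amat_eq_zero_of_not_adj {u v : V n} (hne : u ≠ v) (h : ¬ (G n).Adj u v) :
    Amat n u v = 0 := by
  by_cases h2 : u.2 = v.2 <;> by_cases h1 : u.1 = v.1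
  · exact absurd (Prod.ext h1 h2) hne
  · -- same column, different row, not adjacent
    simp only [Amat, Bmat]
    rw [if_pos h2, if_neg h1, if_neg (fun hc => h (boxProd_adj.2
      (Or.inl ⟨pathGraph_adj.2 hc, h2⟩)))]
    ring
  · simp only [Amat, Bmat]
    rw [if_neg h2, if_pos h1, if_neg (fun hc => h (boxProd_adj.2
      (Or.inr ⟨pathGraph_adj.2 hc, h1⟩)))]
    ring
  · simp only [Amat]
    rw [if_neg h2, if_neg h1]
    ring

lemma Bpow_eq_zero : ∀ (k : ℕ) (x y : Fin n), x.val + k < y.val → (Bmat n ^ k) x y = 0 := by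
  intro k
  induction k with
  | zero =>
    intro x y h
    rw [pow_zero]
    exact Matrix.one_apply_ne (fun he => by have := congrArg Fin.val he; omega)
  | succ k IH =>
    intro x y h
    rw [pow_succ, Matrix.mul_apply]
    apply Finset.sum_eq_zero
    intro z _
    by_cases hzy : z.val + 1 = y.val ∨ y.val + 1 = z.val
    · rw [IH x z (by omega), zero_mul]
    · have : Bmat n z y = 0 := by simp only [Bmat]; rw [if_neg hzy]
      rw [this, mul_zero]

lemma Bpow_eq_one : ∀ (k : ℕ) (x y : Fin n), y.val = x.val + k → (Bmat n ^ k) x y = 1 := by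
  intro k
  induction k with
  | zero =>
    intro x y h
    have hxy : x = y := Fin.ext (by omega)
    rw [pow_zero, hxy, Matrix.one_apply_eq]
  | succ k IH =>
    intro x y h
    rw [pow_succ, Matrix.mul_apply]
    have hz : x.val + k < n := by omega
    have e0 : ((⟨x.val + k, hz⟩ : Fin n)).val = x.val + k := rfl
    rw [Finset.sum_eq_single (⟨x.val + k, hz⟩ : Fin n)]
    · have hB : Bmat n ⟨x.val + k, hz⟩ y = 1 := by
        simp only [Bmat]
        rw [if_pos (Or.inl (by omega))]
      rw [IH x ⟨x.val + k, hz⟩ e0.symm, hB, one_mul]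
    · intro w _ hw
      by_cases hc : w.val + 1 = y.val ∨ y.val + 1 = w.val
      · rcases hc with hc | hc
        · exact absurd (Fin.ext (by omega)) hw
        · rw [Bpow_eq_zero k x w (by omega), zero_mul]
      · have : Bmat n w y = 0 := by simp only [Bmat]; rw [if_neg hc]
        rw [this, mul_zero]
    · intro hz0
      exact absurd (Finset.mem_univ _) hz0

lemma Amat_mulVec_Bpow (k : ℕ) :
    (Amat n).mulVec (fun p : V n => (Bmat n ^ k) p.1 p.2) = 0 := by
  funext u
  simp only [Matrix.mulVec, dotProduct, Pi.zero_apply]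
  have hterm : ∀ v : V n, Amat n u v * (Bmat n ^ k) v.1 v.2
      = (if u.2 = v.2 then Bmat n u.1 v.1 * (Bmat n ^ k) v.1 v.2 else 0)
        - (if u.1 = v.1 then Bmat n u.2 v.2 * (Bmat n ^ k) v.1 v.2 else 0) := by
    intro v
    simp only [Amat]
    split_ifs <;> ring
  rw [Finset.sum_congr rfl (fun v _ => hterm v), Finset.sum_sub_distrib]
  have h1 : ∑ v : V n, (if u.2 = v.2 then Bmat n u.1 v.1 * (Bmat n ^ k) v.1 v.2 else 0)
      = (Bmat n * Bmat n ^ k) u.1 u.2 := by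
    rw [Fintype.sum_prod_type, Matrix.mul_apply]
    apply Finset.sum_congr rfl
    intro c _
    rw [Finset.sum_ite_eq Finset.univ u.2 (fun d => Bmat n u.1 c * (Bmat n ^ k) c d)]
    simp
  have h2 : ∑ v : V n, (if u.1 = v.1 then Bmat n u.2 v.2 * (Bmat n ^ k) v.1 v.2 else 0)
      = (Bmat n ^ k * Bmat n) u.1 u.2 := by
    rw [Fintype.sum_prod_type]
    have e : ∀ c : Fin n, (∑ d, if u.1 = c then Bmat n u.2 d * (Bmat n ^ k) c d else 0)
        = if u.1 = c then ∑ d, Bmat n u.2 d * (Bmat n ^ k) c d else 0 := by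
      intro c
      split_ifs <;> simp
    rw [Finset.sum_congr rfl (fun c _ => e c),
      Finset.sum_ite_eq Finset.univ u.1 (fun c => ∑ d, Bmat n u.2 d * (Bmat n ^ k) c d)]
    simp only [Finset.mem_univ, if_true, Matrix.mul_apply]
    apply Finset.sum_congr rfl
    intro d _
    rw [Bmat_symm u.2 d, mul_comm]
  rw [h1, h2, ← pow_succ', ← pow_succ]
  exact sub_self _

lemma forced_zero {L S : Set (V n)} (x : V n → ℝ) (hx : (Amat n).mulVec x = 0)
    (hS : ∀ s ∈ S, x s = 0) {v : V n} (hv : (G n).LeakyForces L S v) : x v = 0 := by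
  induction hv with
  | init v hv => exact hS v hv
  | force u v hu hcu huv hall ih1 ih2 =>
    have hrow : ∑ w, Amat n u w * x w = 0 := by
      have h := congrFun hx u
      simpa [Matrix.mulVec, dotProduct] using h
    have hsum : ∑ w, Amat n u w * x w = Amat n u v * x v := by
      apply Finset.sum_eq_single v
      · intro w _ hwv
        by_cases hwu : w = u
        · subst hwu; rw [ih1, mul_zero]
        · by_cases hadj : (G n).Adj u w
          · rw [ih2 w hadj hwv, mul_zero]
          · rw [Amat_eq_zero_of_not_adj (fun he => hwu he.symm) hadj, zero_mul]
      · intro hv'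
        exact absurd (Finset.mem_univ v) hv'
    rw [hsum] at hrow
    rcases mul_eq_zero.1 hrow with h | h
    · exact absurd h (Amat_ne_zero_of_adj huv)
    · exact h

lemma lower_bound (S : Finset (V n)) (hf : (G n).IsLeakyForcingSet 1 ↑S) : n ≤ S.card := by
  have h0 : ∀ v, (G n).LeakyForces (↑(∅ : Finset (V n))) ↑S v := hf ∅ (by simp)
  have hli : LinearIndependent ℝ
      (fun (k : Fin n) (s : ↥S) => (Bmat n ^ k.val) s.1.1 s.1.2) := by
    rw [Fintype.linearIndependent_iff]
    intro c hc
    set x : V n → ℝ := fun p => ∑ k : Fin n, c k * (Bmat n ^ k.val) p.1 p.2 with hxdef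
    have hxS : ∀ s ∈ (↑S : Set (V n)), x s = 0 := by
      intro s hs
      have h := congrFun hc ⟨s, hs⟩
      simp only [Finset.sum_apply, Pi.smul_apply, smul_eq_mul, Pi.zero_apply] at h
      rw [hxdef]
      exact h
    have hxker : (Amat n).mulVec x = 0 := by
      funext u
      simp only [Matrix.mulVec, dotProduct, Pi.zero_apply, hxdef]
      calc ∑ w : V n, Amat n u w * ∑ k : Fin n, c k * (Bmat n ^ k.val) w.1 w.2
          = ∑ w : V n, ∑ k : Fin n, c k * (Amat n u w * (Bmat n ^ k.val) w.1 w.2) := by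
            apply Finset.sum_congr rfl
            intro w _
            rw [Finset.mul_sum]
            apply Finset.sum_congr rfl
            intro k _
            ring
        _ = ∑ k : Fin n, ∑ w : V n, c k * (Amat n u w * (Bmat n ^ k.val) w.1 w.2) :=
            Finset.sum_comm
        _ = ∑ k : Fin n, c k * ∑ w : V n, Amat n u w * (Bmat n ^ k.val) w.1 w.2 := by
            apply Finset.sum_congr rfl
            intro k _
            rw [Finset.mul_sum]
        _ = 0 := by
            apply Finset.sum_eq_zero
            intro k _
            have h := congrFun (Amat_mulVec_Bpow (n := n) k.val) u
            simp only [Matrix.mulVec, dotProduct, Pi.zero_apply] at h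
            rw [h, mul_zero]
    have hx0 : ∀ v, x v = 0 := fun v => forced_zero x hxker hxS (h0 v)
    have key : ∀ t, ∀ k : Fin n, n - k.val ≤ t → c k = 0 := by
      intro t
      induction t with
      | zero =>
        intro k hk
        exact absurd hk (by have := k.isLt; omega)
      | succ t IH =>
        intro k hk
        have hn0 : 0 < n := k.pos
        have hxk : ∑ m : Fin n, c m * (Bmat n ^ m.val) (⟨0, hn0⟩ : Fin n) k = 0 :=
          hx0 (⟨0, hn0⟩, k)
        rw [Finset.sum_eq_single k] at hxk
        · rw [Bpow_eq_one k.val ⟨0, hn0⟩ k (Nat.zero_add _).symm, mul_one] at hxk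
          exact hxk
        · intro m _ hmk
          by_cases hlt : m.val < k.val
          · rw [Bpow_eq_zero m.val ⟨0, hn0⟩ k (lt_of_eq_of_lt (Nat.zero_add _) hlt), mul_zero]
          · have hgt : k.val < m.val := by
              rcases Nat.lt_or_ge k.val m.val with h | h
              · exact h
              · exact absurd (Fin.ext (by omega)) hmk
            rw [IH m (by omega), zero_mul]
        · intro hk'
          exact absurd (Finset.mem_univ k) hk'
    exact fun k => key n k (by omega)
  have hcard := hli.fintype_card_le_finrank
  rwa [Fintype.card_fin, Module.finrank_pi, Fintype.card_coe] at hcard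

end GridForcing

theorem square_grid_one_forcing (n : ℕ) (hn : 1 ≤ n) :
    (SimpleGraph.pathGraph n □ SimpleGraph.pathGraph n).leakyForcingNumber 1 = n := by
  apply le_antisymm
  · exact Nat.sInf_le
      ⟨GridForcing.Sstair n, GridForcing.card_Sstair n, GridForcing.stair_forcing n⟩
  · refine le_csInf
      ⟨n, GridForcing.Sstair n, GridForcing.card_Sstair n, GridForcing.stair_forcing n⟩ ?_
    rintro k ⟨S, hcard, hforce⟩
    rw [← hcard]
    exact GridForcing.lower_bound S hforce
end
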